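/- Let L be a finite set of lines in the real projective plane with |L| ≥ 3 such that the lines of L do not all pass through one common point, and let P be a finite set of points of the real projective plane each of which is incident to at least 2 lines of L. Then Σ_{p∈P} d(p)·(d(p)+1) ≤ |L|·(|L|−1) + 6·(|P|−1), where d(p) denotes the degree of p with respect to L. -/

import Mathlib

/- Model of the real projective plane: a point is a 1-dimensional linear subspace
of ℝ³ and a line is a 2-dimensional linear subspace of ℝ³; a point p is incident
to a line ℓ when p ≤ ℓ. -/

open scoped Classical

/-- The degree of a point `p` with respect to a finite set `L` of lines:
the number of lines of `L` incident to `p`. -/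
noncomputable def pointDeg (L : Finset (Submodule ℝ (Fin 3 → ℝ)))
    (p : Submodule ℝ (Fin 3 → ℝ)) : ℕ :=
  (L.filter fun l => p ≤ l).card

/-- The degree of a line `l` with respect to a finite set `P` of points:
the number of points of `P` incident to `l`. -/
noncomputable def lineDeg (P : Finset (Submodule ℝ (Fin 3 → ℝ)))
    (l : Submodule ℝ (Fin 3 → ℝ)) : ℕ :=
  (P.filter fun p => p ≤ l).card

/-- The number of incidences of `(P, L)`: the number of pairs `(p, ℓ) ∈ P × L`
with `p` incident to `ℓ`. -/
noncomputable def incCount (P L : Finset (Submodule ℝ (Fin 3 → ℝ))) : ℕ :=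
  ((P ×ˢ L).filter fun pl => pl.1 ≤ pl.2).card

/-- A point of the real projective plane: a 1-dimensional linear subspace of ℝ³. -/
def IsProjPoint (p : Submodule ℝ (Fin 3 → ℝ)) : Prop := Module.finrank ℝ p = 1

/-- A line of the real projective plane: a 2-dimensional linear subspace of ℝ³. -/
def IsProjLine (l : Submodule ℝ (Fin 3 → ℝ)) : Prop := Module.finrank ℝ l = 2

set_option maxHeartbeats 2000000

open Finset

section MelCore
open scoped Classical

structure MelData (ι : Type) [Fintype ι] where
  n : ℕ
  V : ℕ
  pos : ℕ → ι → ℕ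
  S : ℕ → Finset ι
  a : ℕ → ℕ
  b : ℕ → ℕ
  hn : 3 ≤ n
  hV : 2 ≤ V
  hcard : Fintype.card ι = n
  hinj : ∀ s, s ≤ V → Function.Injective (pos s)
  hrange : ∀ s, s ≤ V → ∀ i, 1 ≤ pos s i ∧ pos s i ≤ n
  hblock : ∀ r, 1 ≤ r → r ≤ V → ∀ i, (i ∈ S r ↔ (a r ≤ pos (r-1) i ∧ pos (r-1) i ≤ b r))
  hstay : ∀ r, 1 ≤ r → r ≤ V → ∀ i, i ∉ S r → pos r i = pos (r-1) i
  hab : ∀ r, 1 ≤ r → r ≤ V → 1 ≤ a r ∧ a r < b r ∧ b r ≤ n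
  hrefl : ∀ i, pos V i + pos 0 i = n + 1
  huniq : ∀ i j : ι, i ≠ j → ∃! r, (1 ≤ r ∧ r ≤ V) ∧ i ∈ S r ∧ j ∈ S r

namespace MelData

variable {ι : Type} [Fintype ι] (D : MelData ι)

/-- surjectivity of the position map onto [1,n] -/
lemma surj {s q : ℕ} (hs : s ≤ D.V) (h1 : 1 ≤ q) (h2 : q ≤ D.n) :
    ∃ i, D.pos s i = q := by
  classical
  have himg : (Finset.univ.image (D.pos s)) = Finset.Icc 1 D.n := by
    apply Finset.eq_of_subset_of_card_le
    · intro x hx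
      simp only [Finset.mem_image] at hx
      obtain ⟨i, _, rfl⟩ := hx
      have := D.hrange s hs i
      simp [Finset.mem_Icc]; omega
    · rw [Finset.card_image_of_injective _ (D.hinj s hs)]
      simp [Nat.card_Icc, D.hcard]
  have : q ∈ Finset.univ.image (D.pos s) := by
    rw [himg]; simp [Finset.mem_Icc]; omega
  simpa using this

lemma card_S {r : ℕ} (h1 : 1 ≤ r) (h2 : r ≤ D.V) :
    (D.S r).card = D.b r + 1 - D.a r := by
  classical
  have hr1 : r - 1 ≤ D.V := by omega
  have hinj := D.hinj (r-1) hr1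
  have himg : (D.S r).image (D.pos (r-1)) = Finset.Icc (D.a r) (D.b r) := by
    ext q
    simp only [Finset.mem_image, Finset.mem_Icc]
    constructor
    · rintro ⟨i, hi, rfl⟩
      exact (D.hblock r h1 h2 i).1 hi
    · rintro ⟨hq1, hq2⟩
      have hab := D.hab r h1 h2
      obtain ⟨i, rfl⟩ := D.surj (q := q) hr1 (by omega) (by omega)
      exact ⟨i, (D.hblock r h1 h2 i).2 ⟨hq1, hq2⟩, rfl⟩
  have := Finset.card_image_of_injective (D.S r) hinj
  rw [himg] at this
  rw [← this, Nat.card_Icc]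

/-- the block at slot r -/
lemma hblock' {r : ℕ} (h1 : 1 ≤ r) (h2 : r ≤ D.V) (i : ι) :
    i ∈ D.S r ↔ (D.a r ≤ D.pos r i ∧ D.pos r i ≤ D.b r) := by
  classical
  constructor
  · intro hi
    by_contra hcon
    have hq := D.hrange r h2 i
    obtain ⟨j, hj⟩ := D.surj (q := D.pos r i) (show r - 1 ≤ D.V by omega) hq.1 hq.2
    have hjS : j ∉ D.S r := by
      intro hjS
      have := (D.hblock r h1 h2 j).1 hjS
      omega
    have : D.pos r j = D.pos r i := by rw [D.hstay r h1 h2 j hjS, hj]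
    have : j = i := D.hinj r h2 this
    subst this
    exact hjS hi
  · intro h
    by_contra hcon
    have := D.hstay r h1 h2 i hcon
    rw [this] at h
    exact hcon ((D.hblock r h1 h2 i).2 h)

/-- constancy: a wire at position q stays there while no block meets position q -/
lemma stay_interval {q r₁ r₂ : ℕ} {i : ι} (hle : r₁ ≤ r₂) (h2 : r₂ ≤ D.V)
    (hq : D.pos r₁ i = q)
    (hfree : ∀ u, r₁ < u → u ≤ r₂ → ¬ (D.a u ≤ q ∧ q ≤ D.b u)) :
    D.pos r₂ i = q ∧ ∀ u, r₁ < u → u ≤ r₂ → i ∉ D.S u := by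
  induction r₂, hle using Nat.le_induction with
  | base => exact ⟨hq, fun u h1 h2 => by omega⟩
  | succ m hm ih =>
    have hm' : m ≤ D.V := by omega
    obtain ⟨hpm, hnotS⟩ := ih hm' (fun u hu1 hu2 => hfree u hu1 (by omega))
    have hS : i ∉ D.S (m+1) := by
      intro hS
      have := (D.hblock (m+1) (by omega) h2 i).1 hS
      simp only [Nat.add_sub_cancel] at this
      rw [hpm] at this
      exact hfree (m+1) (by omega) (by omega) this
    have hpos : D.pos (m+1) i = q := by
      have := D.hstay (m+1) (by omega) h2 i hS
      simp only [Nat.add_sub_cancel] at this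
      rw [this, hpm]
    refine ⟨hpos, fun u hu1 hu2 => ?_⟩
    rcases Nat.lt_or_ge u (m+1) with h | h
    · exact hnotS u hu1 (by omega)
    · have : u = m + 1 := by omega
      subst this; exact hS

/-- event at gap level g at time u -/
def Ev (u g : ℕ) : Prop := D.a u ≤ g + 1 ∧ g ≤ D.b u

/-- pairs cross exactly once -/
lemma cross_once {i j : ι} (hij : i ≠ j) {r r' : ℕ}
    (hr : 1 ≤ r ∧ r ≤ D.V) (hr' : 1 ≤ r' ∧ r' ≤ D.V)
    (hiS : i ∈ D.S r) (hjS : j ∈ D.S r) (hiS' : i ∈ D.S r') (hjS' : j ∈ D.S r') :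
    r = r' := by
  obtain ⟨u, _, huniq⟩ := D.huniq i j hij
  rw [huniq r ⟨hr, hiS, hjS⟩, huniq r' ⟨hr', hiS', hjS'⟩]

/-- a full block (all wires) is impossible -/
lemma no_full_block {t : ℕ} (ht : 1 ≤ t ∧ t ≤ D.V) (hfull : ∀ w : ι, w ∈ D.S t) : False := by
  classical
  obtain ⟨u, hu, hut⟩ : ∃ u, (1 ≤ u ∧ u ≤ D.V) ∧ u ≠ t := by
    rcases eq_or_ne t 1 with h | h
    · exact ⟨2, ⟨by omega, D.hV⟩, by omega⟩
    · exact ⟨1, ⟨le_refl _, by omega⟩, fun hc => h hc.symm⟩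
  have hcard : 2 ≤ (D.S u).card := by
    rw [D.card_S hu.1 hu.2]
    have := D.hab u hu.1 hu.2
    omega
  obtain ⟨i, hi, j, hj, hij⟩ := Finset.one_lt_card.1 hcard
  exact hut (D.cross_once hij hu ht hi hj (hfull i) (hfull j))

/-- direct window and wrap window of a cut -/
noncomputable def Dir (r g : ℕ) : Finset ℕ := (Finset.Ioc r D.V).filter (fun u => D.Ev u g)
noncomputable def Wr (r g : ℕ) : Finset ℕ := (Finset.Ico 1 r).filter (fun u => D.Ev u (D.n - g))

/-- the two wires bounding gap `g` at slot `r` of a cut. -/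
lemma cut_wires {r g : ℕ} (hr : 1 ≤ r ∧ r ≤ D.V) (hcut : D.a r ≤ g ∧ g < D.b r) :
    ∃ i j : ι, i ≠ j ∧ D.pos r i = g ∧ D.pos r j = g + 1 ∧ i ∈ D.S r ∧ j ∈ D.S r := by
  have hab := D.hab r hr.1 hr.2
  obtain ⟨i, hi⟩ := D.surj (q := g) hr.2 (by omega) (by omega)
  obtain ⟨j, hj⟩ := D.surj (q := g+1) hr.2 (by omega) (by omega)
  refine ⟨i, j, ?_, hi, hj, ?_, ?_⟩
  · intro h; rw [h, hj] at hi; omega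
  · rw [D.hblock' hr.1 hr.2 i, hi]; omega
  · rw [D.hblock' hr.1 hr.2 j, hj]; omega

lemma main_direct {r g u : ℕ} (hr : 1 ≤ r ∧ r ≤ D.V) (hcut : D.a r ≤ g ∧ g < D.b r)
    (hu : u ∈ D.Dir r g) (hmin : ∀ u' ∈ D.Dir r g, u ≤ u')
    (hcut' : D.a u ≤ g ∧ g < D.b u) : False := by
  obtain ⟨i, j, hij, hpi, hpj, hiS, hjS⟩ := D.cut_wires hr hcut
  simp only [Dir, Finset.mem_filter, Finset.mem_Ioc] at hu
  obtain ⟨⟨hru, huV⟩, _⟩ := hu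
  have hfree : ∀ u', r < u' → u' ≤ u - 1 → ¬ D.Ev u' g := by
    intro u' h1 h2 hEv
    have : u' ∈ D.Dir r g := by
      simp only [Dir, Finset.mem_filter, Finset.mem_Ioc]
      exact ⟨⟨h1, by omega⟩, hEv⟩
    have := hmin u' this
    omega
  have hstayi := D.stay_interval (show r ≤ u - 1 by omega) (show u - 1 ≤ D.V by omega) hpi
    (fun u' h1 h2 => by
      have := hfree u' h1 h2
      unfold Ev at this; omega)
  have hstayj := D.stay_interval (show r ≤ u - 1 by omega) (show u - 1 ≤ D.V by omega) hpj
    (fun u' h1 h2 => by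
      have := hfree u' h1 h2
      unfold Ev at this; omega)
  have hiS' : i ∈ D.S u := by
    rw [D.hblock u (by omega) huV i, hstayi.1]; omega
  have hjS' : j ∈ D.S u := by
    rw [D.hblock u (by omega) huV j, hstayj.1]; omega
  have := D.cross_once hij hr ⟨by omega, huV⟩ hiS hjS hiS' hjS'
  omega

lemma main_wrap {r g u : ℕ} (hr : 1 ≤ r ∧ r ≤ D.V) (hcut : D.a r ≤ g ∧ g < D.b r)
    (hdir : D.Dir r g = ∅) (hu : u ∈ D.Wr r g) (hmin : ∀ u' ∈ D.Wr r g, u ≤ u')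
    (hcut' : D.a u ≤ D.n - g ∧ D.n - g < D.b u) : False := by
  have habr := D.hab r hr.1 hr.2
  have hg1 : 1 ≤ g := by omega
  have hgn : g + 1 ≤ D.n := by omega
  obtain ⟨i, j, hij, hpi, hpj, hiS, hjS⟩ := D.cut_wires hr hcut
  simp only [Wr, Finset.mem_filter, Finset.mem_Ico] at hu
  obtain ⟨⟨hu1, hur⟩, _⟩ := hu
  -- no direct events at all: wires i, j keep positions g, g+1 up to slot V
  have hfreeV : ∀ u', r < u' → u' ≤ D.V → ¬ D.Ev u' g := by
    intro u' h1 h2 hEv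
    have : u' ∈ D.Dir r g := by
      simp only [Dir, Finset.mem_filter, Finset.mem_Ioc]; exact ⟨⟨h1, h2⟩, hEv⟩
    rw [hdir] at this; simp at this
  have hstayi := D.stay_interval (show r ≤ D.V from hr.2) (le_refl _) hpi
    (fun u' h1 h2 => by have := hfreeV u' h1 h2; unfold Ev at this; omega)
  have hstayj := D.stay_interval (show r ≤ D.V from hr.2) (le_refl _) hpj
    (fun u' h1 h2 => by have := hfreeV u' h1 h2; unfold Ev at this; omega)
  -- reflect to slot 0
  have hp0i : D.pos 0 i = D.n - g + 1 := by
    have := D.hrefl i; rw [hstayi.1] at this; omega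
  have hp0j : D.pos 0 j = D.n - g := by
    have := D.hrefl j; rw [hstayj.1] at this; omega
  -- no wrap events before u
  have hfree0 : ∀ u', 0 < u' → u' ≤ u - 1 → ¬ D.Ev u' (D.n - g) := by
    intro u' h1 h2 hEv
    have : u' ∈ D.Wr r g := by
      simp only [Wr, Finset.mem_filter, Finset.mem_Ico]
      exact ⟨⟨by omega, by omega⟩, hEv⟩
    have := hmin u' this
    omega
  have hstay0i := D.stay_interval (show (0:ℕ) ≤ u - 1 by omega) (show u - 1 ≤ D.V by omega) hp0i
    (fun u' h1 h2 => by have := hfree0 u' h1 h2; unfold Ev at this; omega)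
  have hstay0j := D.stay_interval (show (0:ℕ) ≤ u - 1 by omega) (show u - 1 ≤ D.V by omega) hp0j
    (fun u' h1 h2 => by have := hfree0 u' h1 h2; unfold Ev at this; omega)
  have hiS' : i ∈ D.S u := by
    rw [D.hblock u (by omega) (by omega) i, hstay0i.1]; omega
  have hjS' : j ∈ D.S u := by
    rw [D.hblock u (by omega) (by omega) j, hstay0j.1]; omega
  have := D.cross_once hij hr ⟨by omega, by omega⟩ hiS hjS hiS' hjS'
  omega

lemma main_nonempty {r g : ℕ} (hr : 1 ≤ r ∧ r ≤ D.V) (hcut : D.a r ≤ g ∧ g < D.b r)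
    (hdir : D.Dir r g = ∅) (hwr : D.Wr r g = ∅) : False := by
  have habr := D.hab r hr.1 hr.2
  obtain ⟨i, j, hij, hpi, hpj, hiS, hjS⟩ := D.cut_wires hr hcut
  have hfreeV : ∀ u', r < u' → u' ≤ D.V → ¬ D.Ev u' g := by
    intro u' h1 h2 hEv
    have : u' ∈ D.Dir r g := by
      simp only [Dir, Finset.mem_filter, Finset.mem_Ioc]; exact ⟨⟨h1, h2⟩, hEv⟩
    rw [hdir] at this; simp at this
  have hstayi := D.stay_interval (show r ≤ D.V from hr.2) (le_refl _) hpi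
    (fun u' h1 h2 => by have := hfreeV u' h1 h2; unfold Ev at this; omega)
  have hp0i : D.pos 0 i = D.n - g + 1 := by
    have := D.hrefl i; rw [hstayi.1] at this; omega
  have hfree0 : ∀ u', 0 < u' → u' ≤ r - 1 → ¬ D.Ev u' (D.n - g) := by
    intro u' h1 h2 hEv
    have : u' ∈ D.Wr r g := by
      simp only [Wr, Finset.mem_filter, Finset.mem_Ico]
      exact ⟨⟨by omega, by omega⟩, hEv⟩
    rw [hwr] at this; simp at this
  have hstay0i := D.stay_interval (show (0:ℕ) ≤ r - 1 by omega) (show r - 1 ≤ D.V by omega) hp0i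
    (fun u' h1 h2 => by have := hfree0 u' h1 h2; unfold Ev at this; omega)
  -- wire i is only ever in block r, so S r is everything
  apply D.no_full_block hr
  intro w
  rcases eq_or_ne w i with rfl | hwi
  · exact hiS
  obtain ⟨r', ⟨hr', hwS', hiS'⟩, _⟩ := D.huniq w i hwi
  have : r' = r := by
    by_contra hne
    rcases Nat.lt_or_ge r' r with h | h
    · exact (hstay0i.2 r' (by omega) (by omega)) hiS'
    · exact (hstayi.2 r' (by omega) (by omega)) hiS'
  subst this
  exact hwS'


/-- the wire at position 1 can only move when a block touches position 1 -/
lemma topStay {u : ℕ} (h1 : 1 ≤ u) (h2 : u ≤ D.V) (ha : D.a u ≠ 1) (i : ι) :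
    D.pos u i = 1 ↔ D.pos (u-1) i = 1 := by
  have hab := D.hab u h1 h2
  constructor
  · intro h
    have hiS : i ∉ D.S u := by
      intro hS
      have := (D.hblock' h1 h2 i).1 hS
      omega
    rw [← D.hstay u h1 h2 i hiS, h]
  · intro h
    have hiS : i ∉ D.S u := by
      intro hS
      have := (D.hblock u h1 h2 i).1 hS
      omega
    rw [D.hstay u h1 h2 i hiS, h]

lemma botStay {u : ℕ} (h1 : 1 ≤ u) (h2 : u ≤ D.V) (hb : D.b u ≠ D.n) (i : ι) :
    D.pos u i = D.n ↔ D.pos (u-1) i = D.n := by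
  have hab := D.hab u h1 h2
  have hru : u - 1 ≤ D.V := by omega
  have hri := D.hrange (u-1) hru i
  have hri' := D.hrange u h2 i
  constructor
  · intro h
    have hiS : i ∉ D.S u := by
      intro hS
      have := (D.hblock' h1 h2 i).1 hS
      omega
    rw [← D.hstay u h1 h2 i hiS, h]
  · intro h
    have hiS : i ∉ D.S u := by
      intro hS
      have := (D.hblock u h1 h2 i).1 hS
      omega
    rw [D.hstay u h1 h2 i hiS, h]

lemma exists_a1 : ∃ u, (1 ≤ u ∧ u ≤ D.V) ∧ D.a u = 1 := by
  by_contra hcon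
  push_neg at hcon
  obtain ⟨i, hi⟩ := D.surj (q := 1) (show (0:ℕ) ≤ D.V by omega) (le_refl 1) (by have := D.hn; omega)
  have hstay : ∀ u, u ≤ D.V → D.pos u i = 1 := by
    intro u hu
    induction u with
    | zero => exact hi
    | succ m ih =>
      have h1 : 1 ≤ m + 1 := by omega
      have := D.topStay h1 hu (hcon (m+1) ⟨h1, hu⟩) i
      simp only [Nat.add_sub_cancel] at this
      exact this.2 (ih (by omega))
  have h1 := hstay D.V (le_refl _)
  have := D.hrefl i
  have := D.hn
  omega

lemma exists_bn : ∃ u, (1 ≤ u ∧ u ≤ D.V) ∧ D.b u = D.n := by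
  by_contra hcon
  push_neg at hcon
  obtain ⟨i, hi⟩ := D.surj (q := D.n) (show (0:ℕ) ≤ D.V by omega) (by have := D.hn; omega) (le_refl _)
  have hstay : ∀ u, u ≤ D.V → D.pos u i = D.n := by
    intro u hu
    induction u with
    | zero => exact hi
    | succ m ih =>
      have h1 : 1 ≤ m + 1 := by omega
      have := D.botStay h1 hu (hcon (m+1) ⟨h1, hu⟩) i
      simp only [Nat.add_sub_cancel] at this
      exact this.2 (ih (by omega))
  have h1 := hstay D.V (le_refl _)
  have := D.hrefl i
  have := D.hn
  omega

/-- downward constancy at position 1 -/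
lemma topStayDown {r₁ : ℕ} {i : ι} (hV : D.pos D.V i = 1)
    (hfree : ∀ u, r₁ < u → u ≤ D.V → D.a u ≠ 1) :
    ∀ u, r₁ ≤ u → u ≤ D.V → D.pos u i = 1 := by
  intro u hu1 hu2
  -- induct downward from V: show ∀ k, pos (V - k) i = 1 when V - k ≥ r₁
  suffices h : ∀ k, r₁ ≤ D.V - k → D.pos (D.V - k) i = 1 by
    have := h (D.V - u) (by omega)
    have heq : D.V - (D.V - u) = u := by omega
    rwa [heq] at this
  intro k
  induction k with
  | zero => intro _; simpa using hV
  | succ m ih =>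
    intro hk
    rcases Nat.lt_or_ge m (D.V) with hm | hm
    · have hVm : D.V - m = (D.V - (m+1)) + 1 := by omega
      rcases Nat.lt_or_ge (D.V - (m+1)) r₁ with h' | h'
      · omega
      · have hprev := ih (by omega)
        have h1 : 1 ≤ D.V - m := by omega
        have hne := hfree (D.V - m) (by omega) (by omega)
        have := (D.topStay h1 (by omega) hne i).1 hprev
        have heq : D.V - m - 1 = D.V - (m+1) := by omega
        rwa [heq] at this
    · have heq : D.V - (m+1) = D.V - m := by omega
      rw [heq]; exact ih (by omega)

lemma botStayDown {r₁ : ℕ} {i : ι} (hV : D.pos D.V i = D.n)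
    (hfree : ∀ u, r₁ < u → u ≤ D.V → D.b u ≠ D.n) :
    ∀ u, r₁ ≤ u → u ≤ D.V → D.pos u i = D.n := by
  intro u hu1 hu2
  suffices h : ∀ k, r₁ ≤ D.V - k → D.pos (D.V - k) i = D.n by
    have := h (D.V - u) (by omega)
    have heq : D.V - (D.V - u) = u := by omega
    rwa [heq] at this
  intro k
  induction k with
  | zero => intro _; simpa using hV
  | succ m ih =>
    intro hk
    rcases Nat.lt_or_ge m (D.V) with hm | hm
    · rcases Nat.lt_or_ge (D.V - (m+1)) r₁ with h' | h'
      · omega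
      · have hprev := ih (by omega)
        have h1 : 1 ≤ D.V - m := by omega
        have hne := hfree (D.V - m) (by omega) (by omega)
        have := (D.botStay h1 (by omega) hne i).1 hprev
        have heq : D.V - m - 1 = D.V - (m+1) := by omega
        rwa [heq] at this
    · have heq : D.V - (m+1) = D.V - m := by omega
      rw [heq]; exact ih (by omega)

/-- upward constancy at position 1 / n -/
lemma topStayUp {i : ι} (h0 : D.pos 0 i = 1) {r₂ : ℕ} (hr₂ : r₂ ≤ D.V)
    (hfree : ∀ u, 1 ≤ u → u ≤ r₂ → D.a u ≠ 1) :
    ∀ u, u ≤ r₂ → D.pos u i = 1 := by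
  intro u hu
  induction u with
  | zero => exact h0
  | succ m ih =>
    have := D.topStay (show 1 ≤ m+1 by omega) (by omega) (hfree (m+1) (by omega) hu) i
    simp only [Nat.add_sub_cancel] at this
    exact this.2 (ih (by omega))

lemma botStayUp {i : ι} (h0 : D.pos 0 i = D.n) {r₂ : ℕ} (hr₂ : r₂ ≤ D.V)
    (hfree : ∀ u, 1 ≤ u → u ≤ r₂ → D.b u ≠ D.n) :
    ∀ u, u ≤ r₂ → D.pos u i = D.n := by
  intro u hu
  induction u with
  | zero => exact h0
  | succ m ih =>
    have := D.botStay (show 1 ≤ m+1 by omega) (by omega) (hfree (m+1) (by omega) hu) i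
    simp only [Nat.add_sub_cancel] at this
    exact this.2 (ih (by omega))

/-- At least three boundary touches. -/
lemma outer_ge3 :
    3 ≤ ((Finset.Icc 1 D.V).filter (fun u => D.a u = 1)).card
      + ((Finset.Icc 1 D.V).filter (fun u => D.b u = D.n)).card := by
  classical
  set A := (Finset.Icc 1 D.V).filter (fun u => D.a u = 1) with hA
  set B := (Finset.Icc 1 D.V).filter (fun u => D.b u = D.n) with hB
  obtain ⟨r₁', hr₁', ha1⟩ := D.exists_a1
  obtain ⟨r₂', hr₂', hb1⟩ := D.exists_bn
  have hAne : r₁' ∈ A := by simp [hA, Finset.mem_Icc]; exact ⟨⟨hr₁'.1, hr₁'.2⟩, ha1⟩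
  have hBne : r₂' ∈ B := by simp [hB, Finset.mem_Icc]; exact ⟨⟨hr₂'.1, hr₂'.2⟩, hb1⟩
  have hAcard : 1 ≤ A.card := Finset.card_pos.2 ⟨r₁', hAne⟩
  have hBcard : 1 ≤ B.card := Finset.card_pos.2 ⟨r₂', hBne⟩
  by_contra hcon
  have hAB : A.card = 1 ∧ B.card = 1 := by omega
  obtain ⟨r₁, hA1⟩ := Finset.card_eq_one.1 hAB.1
  obtain ⟨r₂, hB1⟩ := Finset.card_eq_one.1 hAB.2
  have hr₁A : r₁ ∈ A := by rw [hA1]; simp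
  have hr₂B : r₂ ∈ B := by rw [hB1]; simp
  simp only [hA, Finset.mem_filter, Finset.mem_Icc] at hr₁A
  simp only [hB, Finset.mem_filter, Finset.mem_Icc] at hr₂B
  have honlyA : ∀ u, 1 ≤ u → u ≤ D.V → D.a u = 1 → u = r₁ := by
    intro u h1 h2 h3
    have : u ∈ A := by simp [hA, Finset.mem_Icc]; exact ⟨⟨h1, h2⟩, h3⟩
    rw [hA1] at this; simpa using this
  have honlyB : ∀ u, 1 ≤ u → u ≤ D.V → D.b u = D.n → u = r₂ := by
    intro u h1 h2 h3
    have : u ∈ B := by simp [hB, Finset.mem_Icc]; exact ⟨⟨h1, h2⟩, h3⟩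
    rw [hB1] at this; simpa using this
  have hn := D.hn
  rcases lt_trichotomy r₁ r₂ with hlt | heq | hgt
  · -- wire starting at bottom
    obtain ⟨x, hx⟩ := D.surj (q := D.n) (show (0:ℕ) ≤ D.V by omega) (by omega) (le_refl _)
    have hbott : ∀ u, u ≤ r₂ - 1 → D.pos u x = D.n :=
      D.botStayUp hx (by omega) (fun u h1 h2 hbu => by
        have := honlyB u h1 (by omega) hbu; omega)
    have hVx : D.pos D.V x = 1 := by have := D.hrefl x; omega
    have htop : ∀ u, r₁ ≤ u → u ≤ D.V → D.pos u x = 1 :=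
      D.topStayDown hVx (fun u h1 h2 hau => by
        have := honlyA u (by omega) h2 hau; omega)
    have h1 := hbott r₁ (by omega)
    have h2 := htop r₁ (le_refl _) (by omega)
    omega
  · -- same mutation has a = 1, b = n: full block
    subst heq
    apply D.no_full_block ⟨hr₁A.1.1, hr₁A.1.2⟩
    intro w
    rw [D.hblock r₁ hr₁A.1.1 hr₁A.1.2 w]
    have := D.hrange (r₁ - 1) (by omega) w
    omega
  · -- wire starting at top
    obtain ⟨y, hy⟩ := D.surj (q := 1) (show (0:ℕ) ≤ D.V by omega) (le_refl _) (by omega)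
    have htop : ∀ u, u ≤ r₁ - 1 → D.pos u y = 1 :=
      D.topStayUp hy (by omega) (fun u h1 h2 hau => by
        have := honlyA u h1 (by omega) hau; omega)
    have hVy : D.pos D.V y = D.n := by have := D.hrefl y; omega
    have hbot : ∀ u, r₂ ≤ u → u ≤ D.V → D.pos u y = D.n :=
      D.botStayDown hVy (fun u h1 h2 hbu => by
        have := honlyB u (by omega) h2 hbu; omega)
    have h1 := htop r₂ (by omega)
    have h2 := hbot r₂ (le_refl _) (by omega)
    omega


lemma mem_Dir {r g u : ℕ} : u ∈ D.Dir r g ↔ (r < u ∧ u ≤ D.V) ∧ D.Ev u g := by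
  simp [Dir, Finset.mem_Ioc]

lemma mem_Wr {r g u : ℕ} : u ∈ D.Wr r g ↔ (1 ≤ u ∧ u < r) ∧ D.Ev u (D.n - g) := by
  simp [Wr, Finset.mem_Ico]

lemma tok_spec {r g : ℕ} (hr : 1 ≤ r ∧ r ≤ D.V) (hcut : D.a r ≤ g ∧ g < D.b r) :
    ∃ ul : ℕ × ℕ,
      (1 ≤ ul.1 ∧ ul.1 ≤ D.V) ∧ (D.a ul.1 = ul.2 + 1 ∨ D.b ul.1 = ul.2) ∧
      (1 ≤ ul.2 ∧ ul.2 ≤ D.n - 1) ∧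
      ((ul.1 ∈ D.Dir r g ∧ ul.2 = g ∧ ∀ u' ∈ D.Dir r g, ul.1 ≤ u') ∨
       (D.Dir r g = ∅ ∧ ul.1 ∈ D.Wr r g ∧ ul.2 = D.n - g ∧ ∀ u' ∈ D.Wr r g, ul.1 ≤ u')) := by
  classical
  have habr := D.hab r hr.1 hr.2
  have hg : 1 ≤ g ∧ g ≤ D.n - 1 := by omega
  by_cases hdir : (D.Dir r g).Nonempty
  · set u := (D.Dir r g).min' hdir with hu
    have humem : u ∈ D.Dir r g := Finset.min'_mem _ _
    have hmin : ∀ u' ∈ D.Dir r g, u ≤ u' := fun u' h => Finset.min'_le _ _ h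
    have hnotcut : ¬ (D.a u ≤ g ∧ g < D.b u) := fun hc =>
      D.main_direct hr hcut humem hmin hc
    have hEv : D.Ev u g := (D.mem_Dir.1 humem).2
    have huV := (D.mem_Dir.1 humem).1
    refine ⟨(u, g), ⟨by omega, huV.2⟩, ?_, hg, Or.inl ⟨humem, rfl, hmin⟩⟩
    show D.a u = g + 1 ∨ D.b u = g
    unfold Ev at hEv; omega
  · have hde : D.Dir r g = ∅ := Finset.not_nonempty_iff_eq_empty.1 hdir
    by_cases hwr : (D.Wr r g).Nonempty
    · set u := (D.Wr r g).min' hwr with hu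
      have humem : u ∈ D.Wr r g := Finset.min'_mem _ _
      have hmin : ∀ u' ∈ D.Wr r g, u ≤ u' := fun u' h => Finset.min'_le _ _ h
      have hnotcut : ¬ (D.a u ≤ D.n - g ∧ D.n - g < D.b u) := fun hc =>
        D.main_wrap hr hcut hde humem hmin hc
      have hEv : D.Ev u (D.n - g) := (D.mem_Wr.1 humem).2
      have hu1 := (D.mem_Wr.1 humem).1
      refine ⟨(u, D.n - g), ⟨hu1.1, by omega⟩, ?_, by omega, Or.inr ⟨hde, humem, rfl, hmin⟩⟩
      show D.a u = (D.n - g) + 1 ∨ D.b u = D.n - g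
      unfold Ev at hEv; omega
    · exact absurd (D.main_nonempty hr hcut hde (Finset.not_nonempty_iff_eq_empty.1 hwr)) id

noncomputable def tokOf (c : ℕ × ℕ) : ℕ × ℕ :=
  if h : (1 ≤ c.1 ∧ c.1 ≤ D.V) ∧ (D.a c.1 ≤ c.2 ∧ c.2 < D.b c.1) then
    Classical.choose (D.tok_spec h.1 h.2)
  else (0, 0)

noncomputable def CUT : Finset (ℕ × ℕ) :=
  (Finset.Icc 1 D.V ×ˢ Finset.Icc 1 (D.n - 1)).filter (fun c => D.a c.1 ≤ c.2 ∧ c.2 < D.b c.1)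

noncomputable def TOK : Finset (ℕ × ℕ) :=
  (Finset.Icc 1 D.V ×ˢ Finset.Icc 1 (D.n - 1)).filter
    (fun ul => D.a ul.1 = ul.2 + 1 ∨ D.b ul.1 = ul.2)

lemma mem_CUT {c : ℕ × ℕ} :
    c ∈ D.CUT ↔ (1 ≤ c.1 ∧ c.1 ≤ D.V) ∧ (D.a c.1 ≤ c.2 ∧ c.2 < D.b c.1) := by
  simp only [CUT, Finset.mem_filter, Finset.mem_product, Finset.mem_Icc]
  constructor
  · rintro ⟨⟨h1, _⟩, h2⟩; exact ⟨h1, h2⟩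
  · rintro ⟨h1, h2⟩
    have := D.hab c.1 h1.1 h1.2
    exact ⟨⟨h1, by omega⟩, h2⟩

lemma card_CUT_le_TOK : D.CUT.card ≤ D.TOK.card := by
  classical
  apply Finset.card_le_card_of_injOn D.tokOf
  · intro c hc
    rw [Finset.mem_coe, D.mem_CUT] at hc
    unfold tokOf
    rw [dif_pos hc]
    have spec := Classical.choose_spec (D.tok_spec hc.1 hc.2)
    simp only [TOK, Finset.mem_coe, Finset.mem_filter, Finset.mem_product, Finset.mem_Icc]
    exact ⟨⟨⟨spec.1.1, spec.1.2⟩, spec.2.2.1⟩, spec.2.1⟩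
  · intro c₁ hc₁ c₂ hc₂ heq
    rw [Finset.mem_coe, D.mem_CUT] at hc₁ hc₂
    unfold tokOf at heq
    rw [dif_pos hc₁, dif_pos hc₂] at heq
    have s₁ := Classical.choose_spec (D.tok_spec hc₁.1 hc₁.2)
    have s₂ := Classical.choose_spec (D.tok_spec hc₂.1 hc₂.2)
    set ul := Classical.choose (D.tok_spec hc₂.1 hc₂.2) with hul
    rw [heq] at s₁
    obtain ⟨r₁, g₁⟩ := c₁
    obtain ⟨r₂, g₂⟩ := c₂
    simp only at hc₁ hc₂ s₁ s₂ ⊢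
    have hEv₁ : D.Ev r₁ g₁ := by unfold Ev; omega
    have hEv₂ : D.Ev r₂ g₂ := by unfold Ev; omega
    have hg₁ : 1 ≤ g₁ ∧ g₁ ≤ D.n - 1 := by
      have := D.hab r₁ hc₁.1.1 hc₁.1.2; omega
    have hg₂ : 1 ≤ g₂ ∧ g₂ ≤ D.n - 1 := by
      have := D.hab r₂ hc₂.1.1 hc₂.1.2; omega
    have hn := D.hn
    rcases s₁.2.2.2 with ⟨hu1, hlev1, hmin1⟩ | ⟨hde1, hu1, hlev1, hmin1⟩ <;>
      rcases s₂.2.2.2 with ⟨hu2, hlev2, hmin2⟩ | ⟨hde2, hu2, hlev2, hmin2⟩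
    · -- direct, direct
      rw [D.mem_Dir] at hu1 hu2
      have hgeq : g₁ = g₂ := by omega
      rcases lt_trichotomy r₁ r₂ with hlt | heq' | hgt
      · exfalso
        have hmem : r₂ ∈ D.Dir r₁ g₁ := D.mem_Dir.2 ⟨⟨hlt, hc₂.1.2⟩, hgeq ▸ hEv₂⟩
        have := hmin1 r₂ hmem; omega
      · rw [heq', hgeq]
      · exfalso
        have hmem : r₁ ∈ D.Dir r₂ g₂ := D.mem_Dir.2 ⟨⟨hgt, hc₁.1.2⟩, hgeq ▸ hEv₁⟩
        have := hmin2 r₁ hmem; omega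
    · -- direct, wrap
      exfalso
      rw [D.mem_Dir] at hu1
      rw [D.mem_Wr] at hu2
      have hngg : D.n - g₂ = g₁ := by omega
      have hmem : r₁ ∈ D.Wr r₂ g₂ := by
        rw [D.mem_Wr, hngg]
        exact ⟨⟨hc₁.1.1, by omega⟩, hEv₁⟩
      have := hmin2 r₁ hmem; omega
    · -- wrap, direct
      exfalso
      rw [D.mem_Wr] at hu1
      rw [D.mem_Dir] at hu2
      have hngg : D.n - g₁ = g₂ := by omega
      have hmem : r₂ ∈ D.Wr r₁ g₁ := by
        rw [D.mem_Wr, hngg]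
        exact ⟨⟨hc₂.1.1, by omega⟩, hEv₂⟩
      have := hmin1 r₂ hmem; omega
    · -- wrap, wrap
      rw [D.mem_Wr] at hu1 hu2
      have hgeq : g₁ = g₂ := by omega
      rcases lt_trichotomy r₁ r₂ with hlt | heq' | hgt
      · exfalso
        have hmem : r₂ ∈ D.Dir r₁ g₁ := D.mem_Dir.2 ⟨⟨hlt, hc₂.1.2⟩, hgeq ▸ hEv₂⟩
        rw [hde1] at hmem; simp at hmem
      · rw [heq', hgeq]
      · exfalso
        have hmem : r₁ ∈ D.Dir r₂ g₂ := D.mem_Dir.2 ⟨⟨hgt, hc₁.1.2⟩, hgeq ▸ hEv₁⟩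
        rw [hde2] at hmem; simp at hmem

lemma card_TOK_le : D.TOK.card ≤ 2 * D.V - 3 := by
  classical
  have hfib : D.TOK.card = ∑ u ∈ Finset.Icc 1 D.V, ((D.TOK.filter (fun p => p.1 = u)).card) := by
    apply Finset.card_eq_sum_card_fiberwise
    intro p hp
    simp only [TOK, Finset.mem_coe, Finset.mem_filter, Finset.mem_product] at hp
    exact hp.1.1
  have hbound : ∀ u ∈ Finset.Icc 1 D.V,
      (D.TOK.filter (fun p => p.1 = u)).card
        + (if D.a u = 1 then 1 else 0) + (if D.b u = D.n then 1 else 0) ≤ 2 := by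
    intro u hu
    rw [Finset.mem_Icc] at hu
    have hab := D.hab u hu.1 hu.2
    have hn := D.hn
    have hsub : ∀ (T : Finset ℕ), (∀ p ∈ D.TOK.filter (fun p => p.1 = u), p.2 ∈ T) →
        (D.TOK.filter (fun p => p.1 = u)).card ≤ T.card := by
      intro T hT
      apply Finset.card_le_card_of_injOn (fun p => p.2) (fun p hp => hT p hp)
      intro p hp q hq hpq
      simp only [Finset.mem_coe, Finset.mem_filter] at hp hq
      exact Prod.ext (hp.2.trans hq.2.symm) hpq
    by_cases ha1 : D.a u = 1 <;> by_cases hbn : D.b u = D.n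
    · -- both: no tokens
      rw [if_pos ha1, if_pos hbn]
      have := hsub ∅ (by
        intro p hp
        simp only [Finset.mem_filter, TOK, Finset.mem_product, Finset.mem_Icc] at hp
        exfalso
        obtain ⟨⟨⟨_, hlev⟩, htok⟩, hpu⟩ := hp
        rw [hpu] at htok
        omega)
      simp only [Finset.card_empty] at this
      omega
    · rw [if_pos ha1, if_neg hbn]
      have := hsub {D.b u} (by
        intro p hp
        simp only [Finset.mem_filter, TOK, Finset.mem_product, Finset.mem_Icc] at hp
        obtain ⟨⟨⟨hlev1, hlev⟩, htok⟩, hpu⟩ := hp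
        rw [hpu] at htok
        simp only [Finset.mem_singleton]
        omega)
      simp only [Finset.card_singleton] at this
      omega
    · rw [if_neg ha1, if_pos hbn]
      have := hsub {D.a u - 1} (by
        intro p hp
        simp only [Finset.mem_filter, TOK, Finset.mem_product, Finset.mem_Icc] at hp
        obtain ⟨⟨⟨hlev1, hlev⟩, htok⟩, hpu⟩ := hp
        rw [hpu] at htok
        simp only [Finset.mem_singleton]
        omega)
      simp only [Finset.card_singleton] at this
      omega
    · rw [if_neg ha1, if_neg hbn]
      have := hsub {D.a u - 1, D.b u} (by
        intro p hp
        simp only [Finset.mem_filter, TOK, Finset.mem_product, Finset.mem_Icc] at hp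
        obtain ⟨⟨⟨hlev1, hlev⟩, htok⟩, hpu⟩ := hp
        rw [hpu] at htok
        simp only [Finset.mem_insert, Finset.mem_singleton]
        omega)
      have h2 : ({D.a u - 1, D.b u} : Finset ℕ).card ≤ 2 := by
        apply le_trans (Finset.card_insert_le _ _); simp
      omega
  have houter := D.outer_ge3
  have hsum : ∑ u ∈ Finset.Icc 1 D.V,
      (((D.TOK.filter (fun p => p.1 = u)).card)
        + (if D.a u = 1 then 1 else 0) + (if D.b u = D.n then 1 else 0))
      ≤ ∑ u ∈ Finset.Icc 1 D.V, 2 := Finset.sum_le_sum hbound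
  rw [Finset.sum_const, Nat.card_Icc, smul_eq_mul] at hsum
  have hsplit : ∑ u ∈ Finset.Icc 1 D.V,
      (((D.TOK.filter (fun p => p.1 = u)).card)
        + (if D.a u = 1 then 1 else 0) + (if D.b u = D.n then 1 else 0))
      = (∑ u ∈ Finset.Icc 1 D.V, ((D.TOK.filter (fun p => p.1 = u)).card))
        + (∑ u ∈ Finset.Icc 1 D.V, if D.a u = 1 then 1 else 0)
        + (∑ u ∈ Finset.Icc 1 D.V, if D.b u = D.n then 1 else 0) := by
    rw [← Finset.sum_add_distrib, ← Finset.sum_add_distrib]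
  have hA : (∑ u ∈ Finset.Icc 1 D.V, if D.a u = 1 then 1 else 0)
      = ((Finset.Icc 1 D.V).filter (fun u => D.a u = 1)).card := by
    rw [Finset.card_filter]
  have hB : (∑ u ∈ Finset.Icc 1 D.V, if D.b u = D.n then 1 else 0)
      = ((Finset.Icc 1 D.V).filter (fun u => D.b u = D.n)).card := by
    rw [Finset.card_filter]
  rw [hsplit, hA, hB] at hsum
  omega

lemma card_CUT : D.CUT.card = ∑ r ∈ Finset.Icc 1 D.V, (D.b r - D.a r) := by
  classical
  have hfib : D.CUT.card = ∑ u ∈ Finset.Icc 1 D.V, ((D.CUT.filter (fun p => p.1 = u)).card) := by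
    apply Finset.card_eq_sum_card_fiberwise
    intro p hp
    simp only [CUT, Finset.mem_coe, Finset.mem_filter, Finset.mem_product] at hp
    exact hp.1.1
  rw [hfib]
  apply Finset.sum_congr rfl
  intro u hu
  rw [Finset.mem_Icc] at hu
  have hab := D.hab u hu.1 hu.2
  have : D.CUT.filter (fun p => p.1 = u) = (Finset.Icc (D.a u) (D.b u - 1)).image (fun g => (u, g)) := by
    ext ⟨p1, p2⟩
    simp only [Finset.mem_filter, Finset.mem_image, Finset.mem_Icc, CUT, Finset.mem_product,
      Prod.mk.injEq]
    constructor
    · rintro ⟨⟨⟨hp1, hp2⟩, hcut⟩, hpu⟩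
      subst hpu
      exact ⟨p2, ⟨by omega, by omega⟩, rfl, rfl⟩
    · rintro ⟨g, ⟨hg1, hg2⟩, hgu, hgg⟩
      subst hgu
      subst hgg
      refine ⟨⟨⟨⟨?_, ?_⟩, ?_, ?_⟩, ?_, ?_⟩, rfl⟩ <;> omega
  rw [this, Finset.card_image_of_injective _ (fun x y h => by simpa using h), Nat.card_Icc]
  omega

/-- The core combinatorial theorem: Melchior's inequality for sweep data. -/
theorem sum_card_S_le : ∑ r ∈ Finset.Icc 1 D.V, (D.S r).card ≤ 3 * D.V - 3 := by
  classical
  have h1 : ∑ r ∈ Finset.Icc 1 D.V, (D.S r).card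
      = (∑ r ∈ Finset.Icc 1 D.V, (D.b r - D.a r)) + D.V := by
    have : ∀ r ∈ Finset.Icc 1 D.V, (D.S r).card = (D.b r - D.a r) + 1 := by
      intro r hr
      rw [Finset.mem_Icc] at hr
      rw [D.card_S hr.1 hr.2]
      have := D.hab r hr.1 hr.2
      omega
    rw [Finset.sum_congr rfl this, Finset.sum_add_distrib, Finset.sum_const, Nat.card_Icc]
    simp
  have h2 := D.card_CUT_le_TOK
  have h3 := D.card_TOK_le
  have h4 := D.card_CUT
  have hV := D.hV
  omega

end MelData
end MelCore

open Finset Module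

section GeoHelpers
open scoped Classical

abbrev MM := Fin 3 → ℝ

lemma mel_finrank_M : Module.finrank ℝ MM = 3 := Module.finrank_fin_fun ℝ

/-- a functional avoiding finitely many nonzero vectors -/
lemma mel_exists_dual (s : Finset MM) (h0 : (0 : MM) ∉ s) :
    ∃ φ : Module.Dual ℝ MM, ∀ v ∈ s, φ v ≠ 0 := by
  classical
  induction s using Finset.induction with
  | empty => exact ⟨0, by simp⟩
  | @insert v s hv ih =>
    have h0s : (0 : MM) ∉ s := fun h => h0 (Finset.mem_insert_of_mem h)
    have hv0 : v ≠ 0 := fun h => h0 (by rw [← h]; exact Finset.mem_insert_self _ _)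
    obtain ⟨φ, hφ⟩ := ih h0s
    obtain ⟨ψ, hψ⟩ : ∃ ψ : Module.Dual ℝ MM, ψ v ≠ 0 := by
      by_contra hcon
      push_neg at hcon
      exact hv0 ((Module.forall_dual_apply_eq_zero_iff ℝ v).1 hcon)
    obtain ⟨c, hc⟩ := Infinite.exists_notMem_finset
      ((insert v s).image (fun w => -(φ w) / (ψ w)))
    refine ⟨φ + c • ψ, fun w hw => ?_⟩
    simp only [LinearMap.add_apply, LinearMap.smul_apply, smul_eq_mul]
    by_cases hψw : ψ w = 0
    · have hws : w ∈ s := by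
        rcases Finset.mem_insert.1 hw with rfl | h
        · exact absurd hψw hψ
        · exact h
      rw [hψw, mul_zero, add_zero]
      exact hφ w hws
    · intro hcon
      apply hc
      rw [Finset.mem_image]
      refine ⟨w, hw, ?_⟩
      field_simp
      linarith [hcon]

/-- every 2-dimensional subspace is a kernel of a functional -/
lemma mel_exists_ker {l : Submodule ℝ MM} (hl : Module.finrank ℝ l = 2) :
    ∃ φ : Module.Dual ℝ MM, LinearMap.ker φ = l := by
  have hq : Module.finrank ℝ (MM ⧸ l) = 1 := by
    have := Submodule.finrank_quotient_add_finrank l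
    rw [hl, mel_finrank_M] at this
    omega
  obtain ⟨e⟩ := FiniteDimensional.nonempty_linearEquiv_of_finrank_eq
    (hq.trans (Module.finrank_self ℝ).symm)
  refine ⟨(e : (MM ⧸ l) →ₗ[ℝ] ℝ).comp l.mkQ, ?_⟩
  rw [LinearMap.ker_comp, LinearEquiv.ker, Submodule.comap_bot, Submodule.ker_mkQ]

/-- two distinct projective lines meet in a projective point -/
lemma mel_meet_finrank {l₁ l₂ : Submodule ℝ MM} (h₁ : Module.finrank ℝ l₁ = 2)
    (h₂ : Module.finrank ℝ l₂ = 2) (hne : l₁ ≠ l₂) :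
    Module.finrank ℝ ↥(l₁ ⊓ l₂) = 1 := by
  have hsup : Module.finrank ℝ ↥(l₁ ⊔ l₂) = 3 := by
    have hlt : l₁ < l₁ ⊔ l₂ := by
      rcases lt_or_eq_of_le (le_sup_left : l₁ ≤ l₁ ⊔ l₂) with h | h
      · exact h
      · exfalso
        have h2 : l₂ ≤ l₁ := le_sup_right.trans h.ge
        exact hne (Submodule.eq_of_le_of_finrank_eq h2 (h₂.trans h₁.symm)).symm
    have hgt : 2 < Module.finrank ℝ ↥(l₁ ⊔ l₂) := by
      rw [← h₁]
      exact Submodule.finrank_lt_finrank_of_lt hlt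
    have hle : Module.finrank ℝ ↥(l₁ ⊔ l₂) ≤ 3 := by
      have := Submodule.finrank_le (l₁ ⊔ l₂)
      rwa [mel_finrank_M] at this
    omega
  have := Submodule.finrank_sup_add_finrank_inf_eq l₁ l₂
  rw [hsup, h₁, h₂] at this
  omega

/-- a 1-dimensional subspace contained in another 1-dimensional one is equal to it -/
lemma mel_point_eq {p v : Submodule ℝ MM} (hp : Module.finrank ℝ p = 1)
    (hv : Module.finrank ℝ v = 1) (h : p ≤ v) : p = v :=
  Submodule.eq_of_le_of_finrank_eq h (hp.trans hv.symm)

/-- generator of a 1-dimensional subspace -/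
lemma mel_gen {v : Submodule ℝ MM} (hv : Module.finrank ℝ v = 1) :
    ∃ x : MM, x ∈ v ∧ x ≠ 0 ∧ v = Submodule.span ℝ {x} := by
  obtain ⟨⟨x, hxv⟩, hx0, hgen⟩ := finrank_eq_one_iff'.1 hv
  refine ⟨x, hxv, fun h => hx0 (by ext; simp [h]), ?_⟩
  apply le_antisymm
  · intro w hw
    obtain ⟨c, hc⟩ := hgen ⟨w, hw⟩
    have : c • x = w := congrArg Subtype.val hc
    rw [← this]
    exact Submodule.smul_mem _ _ (Submodule.mem_span_singleton_self x)
  · rw [Submodule.span_le, Set.singleton_subset_iff]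
    exact hxv

lemma mel_span_le_iff {x : MM} {l : Submodule ℝ MM} :
    Submodule.span ℝ {x} ≤ l ↔ x ∈ l := by
  rw [Submodule.span_le, Set.singleton_subset_iff]; rfl

end GeoHelpers

open Finset Module

section SweepHelpers
open scoped Classical

lemma mel_root_between {A s t τ : ℝ} (hst : s < t) (h : (A*(s-τ)) * (A*(t-τ)) < 0) :
    s < τ ∧ τ < t := by
  constructor
  · by_contra hc; push_neg at hc
    have h1 : (0:ℝ) ≤ (s - τ) * (t - τ) := mul_nonneg (by linarith) (by linarith)
    nlinarith [mul_nonneg (sq_nonneg A) h1]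
  · by_contra hc; push_neg at hc
    have h1 : (0:ℝ) ≤ (τ - s) * (τ - t) := mul_nonneg (by linarith) (by linarith)
    nlinarith [mul_nonneg (sq_nonneg A) h1]

lemma mel_rank_lt {ι : Type} [Fintype ι] (f : ι → ℝ) {i j : ι} (h : f i < f j) :
    (Finset.univ.filter fun k => f k < f i).card
      < (Finset.univ.filter fun k => f k < f j).card := by
  classical
  apply Finset.card_lt_card
  rw [Finset.ssubset_iff_of_subset]
  · exact ⟨i, by simp [h], by simp⟩
  · intro k hk
    simp only [Finset.mem_filter, Finset.mem_univ, true_and] at hk ⊢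
    linarith

end SweepHelpers

section MelSweep
open scoped Classical

lemma mel_sweep {ι W : Type} [Fintype ι] [Fintype W]
    (α β : ι → ℝ) (tc hgt : W → ℝ)
    (hn : 3 ≤ Fintype.card ι) (hW : 2 ≤ Fintype.card W)
    (htinj : Function.Injective tc)
    (hαne : ∀ i j : ι, i ≠ j → α i ≠ α j)
    (hsurj : ∀ v : W, ∃ i j : ι, i ≠ j ∧ (α i * tc v + β i = hgt v) ∧ (α j * tc v + β j = hgt v))
    (hcrossT : ∀ i j : ι, i ≠ j → ∀ τ : ℝ, α i * τ + β i = α j * τ + β j →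
      ∃ v : W, tc v = τ ∧ (α i * tc v + β i = hgt v) ∧ (α j * tc v + β j = hgt v)) :
    ∑ v : W, (Finset.univ.filter (fun i : ι => α i * tc v + β i = hgt v)).card
      ≤ 3 * Fintype.card W - 3 := by
  classical
  set n := Fintype.card ι with hndef
  set V := Fintype.card W with hVdef
  set y : ι → ℝ → ℝ := fun i t => α i * t + β i with hy
  -- crossing time of two wires
  set τf : ι → ι → ℝ := fun i j => (β j - β i) / (α i - α j) with hτf
  have hfact : ∀ i j : ι, i ≠ j → ∀ t : ℝ, y i t - y j t = (α i - α j) * (t - τf i j) := by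
    intro i j hij t
    have hne := hαne i j hij
    show α i * t + β i - (α j * t + β j) = (α i - α j) * (t - (β j - β i) / (α i - α j))
    have hne2 : α i - α j ≠ 0 := sub_ne_zero.2 hne
    field_simp
    ring
  have hcross_iff : ∀ i j : ι, i ≠ j → ∀ t : ℝ, (y i t = y j t ↔ t = τf i j) := by
    intro i j hij t
    have hne := hαne i j hij
    have := hfact i j hij t
    constructor
    · intro h
      rw [h] at this
      have h2 : (α i - α j) * (t - τf i j) = 0 := by linarith
      rcases mul_eq_zero.1 h2 with h3 | h3
      · exact absurd (by linarith : α i = α j) hne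
      · linarith
    · intro h
      have h2 := hfact i j hij t
      rw [h, sub_self, mul_zero] at h2
      rw [h]
      linarith
  -- the set of vertex times
  set T : Finset ℝ := Finset.univ.image tc with hT
  have hTcard : T.card = V := by
    rw [hT, Finset.card_image_of_injective _ htinj, Finset.card_univ]
  set oi := T.orderIsoOfFin hTcard with hoi
  have hV0 : 0 < V := by omega
  set tval : ℕ → ℝ := fun k => if h : k < V then (oi ⟨k, h⟩ : ℝ) else 0 with htval
  have htval_lt_iff : ∀ k k', k < V → k' < V → (tval k < tval k' ↔ k < k') := by
    intro k k' hk hk'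
    rw [htval]
    simp only [dif_pos hk, dif_pos hk']
    rw [show ((oi ⟨k, hk⟩ : T) : ℝ) < ((oi ⟨k', hk'⟩ : T) : ℝ) ↔ oi ⟨k, hk⟩ < oi ⟨k', hk'⟩ from Iff.rfl]
    rw [oi.lt_iff_lt]
    exact Fin.lt_iff_val_lt_val
  have htval_inj : ∀ k k', k < V → k' < V → tval k = tval k' → k = k' := by
    intro k k' hk hk' h
    by_contra hne
    rcases Nat.lt_or_ge k k' with h1 | h1
    · have := (htval_lt_iff k k' hk hk').2 h1; linarith
    · have h2 : k' < k := by omega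
      have := (htval_lt_iff k' k hk' hk).2 h2; linarith
  have htmem : ∀ k, k < V → tval k ∈ T := by
    intro k hk
    rw [htval]
    simp only [dif_pos hk]
    exact (oi ⟨k, hk⟩).2
  have htsurj : ∀ τ ∈ T, ∃ k, k < V ∧ tval k = τ := by
    intro τ hτ
    obtain ⟨a, ha⟩ := oi.surjective ⟨τ, hτ⟩
    refine ⟨a.1, a.2, ?_⟩
    rw [htval]
    simp only [dif_pos a.2]
    rw [show (⟨a.1, a.2⟩ : Fin V) = a from rfl, ha]
  have hWne : Nonempty W := Fintype.card_pos_iff.1 (by omega)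
  -- vertices by sorted time
  have hvertex : ∀ k : ℕ, ∃ v : W, k < V → tc v = tval k := by
    intro k
    by_cases hk : k < V
    · have := htmem k hk
      rw [hT, Finset.mem_image] at this
      obtain ⟨v, _, hv⟩ := this
      exact ⟨v, fun _ => hv⟩
    · exact ⟨Classical.arbitrary W, fun h => absurd h hk⟩
  choose vertk hvertk using hvertex
  set vrt : ℕ → W := fun r => vertk (r-1) with hvrt
  have hvrt_tc : ∀ r, 1 ≤ r → r ≤ V → tc (vrt r) = tval (r-1) := by
    intro r h1 h2
    exact hvertk (r-1) (by omega)
  -- sample points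
  set sam : ℕ → ℝ := fun r => if r = 0 then tval 0 - 1
    else if r < V then (tval (r-1) + tval r)/2 else tval (V-1) + 1 with hsam
  have hsam_0 : sam 0 = tval 0 - 1 := by simp [hsam]
  have hsam_V : sam V = tval (V-1) + 1 := by
    have h1 : ¬ V = 0 := by omega
    simp [hsam, h1]
  have hsam_mid : ∀ r, 1 ≤ r → r < V → sam r = (tval (r-1) + tval r)/2 := by
    intro r h1 h2
    have h0 : ¬ r = 0 := by omega
    simp [hsam, h0, h2]
  have htval_le : ∀ k k', k ≤ k' → k' < V → tval k ≤ tval k' := by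
    intro k k' hkk hk'
    rcases Nat.eq_or_lt_of_le hkk with h | h
    · rw [h]
    · exact le_of_lt ((htval_lt_iff k k' (by omega) hk').2 h)
  have hsam0 : ∀ k, k < V → sam 0 < tval k := by
    intro k hk
    have := htval_le 0 k (by omega) hk
    rw [hsam_0]; linarith
  have hsamV : ∀ k, k < V → tval k < sam V := by
    intro k hk
    have := htval_le k (V-1) (by omega) (by omega)
    rw [hsam_V]; linarith
  have hsep : ∀ r, 1 ≤ r → r ≤ V → sam (r-1) < tval (r-1) ∧ tval (r-1) < sam r := by
    intro r h1 h2
    constructor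
    · rcases eq_or_ne r 1 with heq | hne
      · rw [heq]; simpa using hsam0 0 hV0
      · have h2r : 2 ≤ r := by omega
        have hmid := hsam_mid (r-1) (by omega) (by omega)
        have heq2 : r - 1 - 1 = r - 2 := by omega
        rw [heq2] at hmid
        have hmono : tval (r-2) < tval (r-1) := (htval_lt_iff _ _ (by omega) (by omega)).2 (by omega)
        rw [hmid]; linarith
    · rcases eq_or_ne r V with heq | hne
      · rw [heq]; exact hsamV (V-1) (by omega)
      · have hmid := hsam_mid r (by omega) (by omega)
        have hmono : tval (r-1) < tval r := (htval_lt_iff _ _ (by omega) (by omega)).2 (by omega)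
        rw [hmid]; linarith
  have hbetween : ∀ r, 1 ≤ r → r ≤ V → ∀ k, k < V → sam (r-1) < tval k → tval k < sam r →
      k = r - 1 := by
    intro r h1 h2 k hk hk1 hk2
    by_contra hne
    rcases Nat.lt_or_ge k (r-1) with h | h
    · have h2r : 2 ≤ r := by omega
      have hs : tval k ≤ tval (r-2) := htval_le k (r-2) (by omega) (by omega)
      have hmid := hsam_mid (r-1) (by omega) (by omega)
      have heq2 : r - 1 - 1 = r - 2 := by omega
      rw [heq2] at hmid
      have hmono : tval (r-2) < tval (r-1) := (htval_lt_iff _ _ (by omega) (by omega)).2 (by omega)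
      rw [hmid] at hk1; linarith
    · have hkr : r ≤ k := by omega
      have hrV : r < V := by omega
      have hs : tval r ≤ tval k := htval_le r k hkr hk
      have hmid := hsam_mid r (by omega) hrV
      have hmono : tval (r-1) < tval r := (htval_lt_iff _ _ (by omega) hrV).2 (by omega)
      rw [hmid] at hk2; linarith
  have hsamNotT : ∀ r, r ≤ V → ∀ k, k < V → tval k ≠ sam r := by
    intro r hr k hk
    rcases Nat.eq_zero_or_pos r with heq | hr1
    · rw [heq]; exact ne_of_gt (hsam0 k hk)
    rcases eq_or_ne r V with heq | hne
    · rw [heq]; exact ne_of_lt (hsamV k hk)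
    · have hrV : r < V := by omega
      intro heq2
      have hmid := hsam_mid r (by omega) hrV
      have hmono : tval (r-1) < tval r := (htval_lt_iff _ _ (by omega) hrV).2 (by omega)
      have hk1 : tval (r-1) < tval k := by rw [heq2, hmid]; linarith
      have hk2 : tval k < tval r := by rw [heq2, hmid]; linarith
      have := (htval_lt_iff _ _ (by omega) hk).1 hk1
      have := (htval_lt_iff _ _ hk hrV).1 hk2
      omega
  -- distinct values at sample points
  have hP0 : ∀ r, r ≤ V → ∀ i j : ι, i ≠ j → y i (sam r) ≠ y j (sam r) := by
    intro r hr i j hij heq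
    have hτ : sam r = τf i j := (hcross_iff i j hij _).1 heq
    obtain ⟨v, hv, _, _⟩ := hcrossT i j hij (τf i j) (by
      have := (hcross_iff i j hij (τf i j)).2 rfl
      simpa [hy] using this)
    have : tc v ∈ T := by rw [hT]; exact Finset.mem_image_of_mem _ (Finset.mem_univ v)
    obtain ⟨k, hk, hkeq⟩ := htsurj _ this
    exact hsamNotT r hr k hk (by rw [hkeq, hv, hτ])
  -- position functions
  set posN : ℕ → ι → ℕ :=
    fun r i => 1 + (Finset.univ.filter (fun j => y j (sam r) < y i (sam r))).card with hposN
  have hposN_eq : ∀ r (i : ι),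
      posN r i = 1 + (Finset.univ.filter (fun j => y j (sam r) < y i (sam r))).card :=
    fun r i => rfl
  have hlt : ∀ r, ∀ i j : ι, y i (sam r) < y j (sam r) → posN r i < posN r j := by
    intro r i j h
    have h2 := mel_rank_lt (f := fun k => y k (sam r)) (i := i) (j := j) h
    exact Nat.add_lt_add_left h2 1
  have hlt_iff : ∀ r, r ≤ V → ∀ i j : ι, i ≠ j →
      (y i (sam r) < y j (sam r) ↔ posN r i < posN r j) := by
    intro r hr i j hij
    constructor
    · exact hlt r i j
    · intro h
      rcases lt_trichotomy (y i (sam r)) (y j (sam r)) with h' | h' | h'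
      · exact h'
      · exact absurd h' (hP0 r hr i j hij)
      · have := hlt r j i h'; omega
  have hposinj : ∀ r, r ≤ V → Function.Injective (posN r) := by
    intro r hr i j hij
    by_contra hne
    rcases lt_trichotomy (y i (sam r)) (y j (sam r)) with h | h | h
    · have := hlt r i j h; omega
    · exact hP0 r hr i j hne h
    · have := hlt r j i h; omega
  have hposrange : ∀ r, ∀ i, 1 ≤ posN r i ∧ posN r i ≤ n := by
    intro r i
    rw [hposN_eq]
    constructor
    · omega
    ·
      have hsub : (Finset.univ.filter (fun j => y j (sam r) < y i (sam r)))
          ⊆ Finset.univ.erase i := by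
        intro k hk
        rw [Finset.mem_filter] at hk
        rw [Finset.mem_erase]
        exact ⟨fun hki => by rw [hki] at hk; exact lt_irrefl _ hk.2, Finset.mem_univ _⟩
      have := Finset.card_le_card hsub
      rw [Finset.card_erase_of_mem (Finset.mem_univ i), Finset.card_univ, ← hndef] at this
      omega
  -- blocks
  set SS : ℕ → Finset ι :=
    fun r => Finset.univ.filter (fun i => y i (tc (vrt r)) = hgt (vrt r)) with hSS
  have hSmem : ∀ r (i : ι), i ∈ SS r ↔ y i (tc (vrt r)) = hgt (vrt r) := by
    intro r i; simp [hSS]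
  have hSne2 : ∀ r, ∃ i j : ι, i ≠ j ∧ i ∈ SS r ∧ j ∈ SS r := by
    intro r
    obtain ⟨i, j, hij, h1, h2⟩ := hsurj (vrt r)
    exact ⟨i, j, hij, (hSmem r i).2 h1, (hSmem r j).2 h2⟩
  have hSne : ∀ r, (SS r).Nonempty := fun r => by
    obtain ⟨i, _, _, hi, _⟩ := hSne2 r
    exact ⟨i, hi⟩
  set aF : ℕ → ℕ := fun r => (SS r).inf' (hSne r) (posN (r-1)) with haF
  set bF : ℕ → ℕ := fun r => (SS r).sup' (hSne r) (posN (r-1)) with hbF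
  -- every pair of wires crosses at a vertex slot
  have hvertex_of_cross : ∀ i j : ι, i ≠ j →
      ∃ r, (1 ≤ r ∧ r ≤ V) ∧ tc (vrt r) = τf i j ∧ i ∈ SS r ∧ j ∈ SS r := by
    intro i j hij
    obtain ⟨v, hveq, hvi, hvj⟩ := hcrossT i j hij (τf i j) (by
      have h1 := hfact i j hij (τf i j)
      rw [sub_self, mul_zero] at h1
      have h2 : y i (τf i j) = y j (τf i j) := by linarith
      exact h2)
    obtain ⟨k, hk, hkeq⟩ := htsurj (tc v)
      (by rw [hT]; exact Finset.mem_image_of_mem _ (Finset.mem_univ v))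
    have h2 := hvrt_tc (k+1) (by omega) (by omega)
    simp only [Nat.add_sub_cancel] at h2
    have hvv : vrt (k+1) = v := htinj (by rw [h2, hkeq])
    refine ⟨k+1, ⟨by omega, by omega⟩, ?_, ?_, ?_⟩
    · rw [h2, hkeq, hveq]
    · rw [hSmem, hvv]; exact hvi
    · rw [hSmem, hvv]; exact hvj
  -- hblock
  have hblockP : ∀ r, 1 ≤ r → r ≤ V → ∀ i : ι,
      (i ∈ SS r ↔ (aF r ≤ posN (r-1) i ∧ posN (r-1) i ≤ bF r)) := by
    intro r h1 h2 i
    constructor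
    · intro hi
      exact ⟨Finset.inf'_le _ hi, Finset.le_sup' _ hi⟩
    · rintro ⟨hai, hbi⟩
      by_contra hiS
      obtain ⟨i₀, hi₀S, hi₀⟩ := Finset.exists_mem_eq_inf' (hSne r) (posN (r-1))
      obtain ⟨j₀, hj₀S, hj₀⟩ := Finset.exists_mem_eq_sup' (hSne r) (posN (r-1))
      have haFr : aF r = posN (r-1) i₀ := hi₀
      have hbFr : bF r = posN (r-1) j₀ := hj₀
      have hii₀ : i ≠ i₀ := fun h => hiS (h ▸ hi₀S)
      have hij₀ : i ≠ j₀ := fun h => hiS (h ▸ hj₀S)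
      have hr1V : r - 1 ≤ V := by omega
      have hstrict1 : posN (r-1) i₀ < posN (r-1) i := by
        rcases Nat.lt_or_ge (posN (r-1) i₀) (posN (r-1) i) with h | h
        · exact h
        · have heq : posN (r-1) i₀ = posN (r-1) i := by omega
          exact absurd (hposinj (r-1) hr1V heq) (Ne.symm hii₀)
      have hstrict2 : posN (r-1) i < posN (r-1) j₀ := by
        rcases Nat.lt_or_ge (posN (r-1) i) (posN (r-1) j₀) with h | h
        · exact h
        · have heq : posN (r-1) i = posN (r-1) j₀ := by omega
          exact absurd (hposinj (r-1) hr1V heq) hij₀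
      have hy1 : y i₀ (sam (r-1)) < y i (sam (r-1)) :=
        (hlt_iff (r-1) hr1V i₀ i (Ne.symm hii₀)).2 hstrict1
      have hy2 : y i (sam (r-1)) < y j₀ (sam (r-1)) :=
        (hlt_iff (r-1) hr1V i j₀ hij₀).2 hstrict2
      have hti₀ : y i₀ (tc (vrt r)) = hgt (vrt r) := (hSmem r i₀).1 hi₀S
      have htj₀ : y j₀ (tc (vrt r)) = hgt (vrt r) := (hSmem r j₀).1 hj₀S
      have hti : y i (tc (vrt r)) ≠ hgt (vrt r) := fun h => hiS ((hSmem r i).2 h)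
      have htvrt := hvrt_tc r h1 h2
      have hsep' := hsep r h1 h2
      have hsr : sam (r-1) < tc (vrt r) := by rw [htvrt]; exact hsep'.1
      have hrs : tc (vrt r) < sam r := by rw [htvrt]; exact hsep'.2
      rcases lt_or_gt_of_ne hti with hlt' | hgt'
      · -- use pair (i, i₀): y i - y i₀ positive at sam (r-1), negative at vertex
        have hd1 : 0 < y i (sam (r-1)) - y i₀ (sam (r-1)) := by linarith
        have hd2 : y i (tc (vrt r)) - y i₀ (tc (vrt r)) < 0 := by rw [hti₀]; linarith
        have hf1 := hfact i i₀ hii₀ (sam (r-1))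
        have hf2 := hfact i i₀ hii₀ (tc (vrt r))
        have hprod : ((α i - α i₀) * (sam (r-1) - τf i i₀))
            * ((α i - α i₀) * (tc (vrt r) - τf i i₀)) < 0 := by
          rw [← hf1, ← hf2]
          exact mul_neg_of_pos_of_neg hd1 hd2
        have hbet := mel_root_between hsr hprod
        obtain ⟨rr, hrr, hrreq, _, _⟩ := hvertex_of_cross i i₀ hii₀
        have hkk : tval (rr-1) = τf i i₀ := by rw [← hvrt_tc rr hrr.1 hrr.2, hrreq]
        have hb1 : sam (r-1) < tval (rr-1) := by rw [hkk]; exact hbet.1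
        have hb2 : tval (rr-1) < sam r := by rw [hkk]; linarith [hbet.2]
        have heqr := hbetween r h1 h2 (rr-1) (by omega) hb1 hb2
        rw [heqr] at hkk
        rw [← htvrt] at hkk
        linarith [hbet.2, hkk.ge, hkk.le]
      · -- use pair (i, j₀): y i - y j₀ negative at sam (r-1), positive at vertex
        have hd1 : y i (sam (r-1)) - y j₀ (sam (r-1)) < 0 := by linarith
        have hd2 : 0 < y i (tc (vrt r)) - y j₀ (tc (vrt r)) := by rw [htj₀]; linarith
        have hf1 := hfact i j₀ hij₀ (sam (r-1))
        have hf2 := hfact i j₀ hij₀ (tc (vrt r))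
        have hprod : ((α i - α j₀) * (sam (r-1) - τf i j₀))
            * ((α i - α j₀) * (tc (vrt r) - τf i j₀)) < 0 := by
          rw [← hf1, ← hf2]
          exact mul_neg_of_neg_of_pos hd1 hd2
        have hbet := mel_root_between hsr hprod
        obtain ⟨rr, hrr, hrreq, _, _⟩ := hvertex_of_cross i j₀ hij₀
        have hkk : tval (rr-1) = τf i j₀ := by rw [← hvrt_tc rr hrr.1 hrr.2, hrreq]
        have hb1 : sam (r-1) < tval (rr-1) := by rw [hkk]; exact hbet.1
        have hb2 : tval (rr-1) < sam r := by rw [hkk]; linarith [hbet.2]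
        have heqr := hbetween r h1 h2 (rr-1) (by omega) hb1 hb2
        rw [heqr] at hkk
        rw [← htvrt] at hkk
        linarith [hbet.2, hkk.ge, hkk.le]
  -- hstay
  have hstayP : ∀ r, 1 ≤ r → r ≤ V → ∀ i : ι, i ∉ SS r → posN r i = posN (r-1) i := by
    intro r h1 h2 i hiS
    have hcore : ∀ j : ι, j ≠ i → ¬ ((y j (sam r) < y i (sam r)) ↔ ¬ (y j (sam (r-1)) < y i (sam (r-1)))) := by
      intro j hji hiff
      have hij : i ≠ j := Ne.symm hji
      have hne0 : y i (sam (r-1)) ≠ y j (sam (r-1)) := hP0 (r-1) (by omega) i j hij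
      have hne1 : y i (sam r) ≠ y j (sam r) := hP0 r h2 i j hij
      -- in either case the difference changes sign between sam (r-1) and sam r
      have hd : (y i (sam (r-1)) - y j (sam (r-1))) * (y i (sam r) - y j (sam r)) < 0 := by
        rcases hiff with ⟨h1', h2'⟩
        by_cases hcase : y j (sam r) < y i (sam r)
        · have := h1' hcase
          have hx1 : y i (sam (r-1)) - y j (sam (r-1)) < 0 := by
            rcases lt_or_gt_of_ne hne0 with h | h
            · linarith
            · exfalso; exact this (by linarith)
          have hx2 : 0 < y i (sam r) - y j (sam r) := by linarith
          exact mul_neg_of_neg_of_pos hx1 hx2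
        · have hx2 : y i (sam r) - y j (sam r) < 0 := by
            rcases lt_or_gt_of_ne hne1 with h | h
            · linarith
            · exfalso; exact hcase (by linarith)
          have hx1 : 0 < y i (sam (r-1)) - y j (sam (r-1)) := by
            by_contra hcon
            push_neg at hcon
            have hc : ¬ (y j (sam (r-1)) < y i (sam (r-1))) := by linarith
            exact hcase (h2' hc)
          exact mul_neg_of_pos_of_neg hx1 hx2
      have hf1 := hfact i j hij (sam (r-1))
      have hf2 := hfact i j hij (sam r)
      have hprod : ((α i - α j) * (sam (r-1) - τf i j))
          * ((α i - α j) * (sam r - τf i j)) < 0 := by rw [← hf1, ← hf2]; exact hd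
      have hsep' := hsep r h1 h2
      have hbet := mel_root_between (show sam (r-1) < sam r by linarith [hsep'.1, hsep'.2]) hprod
      obtain ⟨rr, hrr, hrreq, hiSS, hjSS⟩ := hvertex_of_cross i j hij
      have hkk : tval (rr-1) = τf i j := by rw [← hvrt_tc rr hrr.1 hrr.2, hrreq]
      have hb1 : sam (r-1) < tval (rr-1) := by rw [hkk]; exact hbet.1
      have hb2 : tval (rr-1) < sam r := by rw [hkk]; exact hbet.2
      have heqr := hbetween r h1 h2 (rr-1) (by omega) hb1 hb2
      have hvrteq : vrt rr = vrt r := by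
        apply htinj
        rw [hvrt_tc rr hrr.1 hrr.2, hvrt_tc r h1 h2, heqr]
      apply hiS
      rw [hSmem]
      rw [← hvrteq]
      exact (hSmem rr i).1 hiSS
    have hfilter : (Finset.univ.filter (fun j => y j (sam r) < y i (sam r)))
        = (Finset.univ.filter (fun j => y j (sam (r-1)) < y i (sam (r-1)))) := by
      ext j
      simp only [Finset.mem_filter, Finset.mem_univ, true_and]
      rcases eq_or_ne j i with rfl | hji
      · simp
      · have := hcore j hji
        constructor
        · intro h
          by_contra hcon
          exact this ⟨fun _ => hcon, fun _ => h⟩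
        · intro h
          by_contra hcon
          exact this ⟨fun hc => absurd hc hcon, fun hc => absurd h hc⟩
    rw [hposN_eq, hposN_eq, hfilter]
  -- hrefl
  have hreflP : ∀ i : ι, posN V i + posN 0 i = n + 1 := by
    intro i
    have hkey : ∀ j : ι, j ≠ i →
        (y j (sam V) < y i (sam V) ↔ ¬ (y j (sam 0) < y i (sam 0))) := by
      intro j hji
      have hij : i ≠ j := Ne.symm hji
      obtain ⟨rr, hrr, hrreq, _, _⟩ := hvertex_of_cross i j hij
      have hkk : tval (rr-1) = τf i j := by rw [← hvrt_tc rr hrr.1 hrr.2, hrreq]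
      have hs0 : sam 0 < τf i j := by rw [← hkk]; exact hsam0 (rr-1) (by omega)
      have hsV : τf i j < sam V := by rw [← hkk]; exact hsamV (rr-1) (by omega)
      have hf0 := hfact i j hij (sam 0)
      have hfV := hfact i j hij (sam V)
      have hne0 : y i (sam 0) ≠ y j (sam 0) := hP0 0 (by omega) i j hij
      have hneV : y i (sam V) ≠ y j (sam V) := hP0 V (le_refl V) i j hij
      have hA2 : 0 < (α i - α j) * (α i - α j) :=
        mul_self_pos.2 (sub_ne_zero.2 (hαne i j hij))
      have hz1 : sam 0 - τf i j < 0 := by linarith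
      have hz2 : 0 < sam V - τf i j := by linarith
      have hprodneg : (y i (sam 0) - y j (sam 0)) * (y i (sam V) - y j (sam V)) < 0 := by
        rw [hf0, hfV]
        nlinarith [mul_neg_of_neg_of_pos hz1 hz2, hA2]
      constructor
      · intro h hcon
        have hp := mul_pos (show (0:ℝ) < y i (sam 0) - y j (sam 0) by linarith)
          (show (0:ℝ) < y i (sam V) - y j (sam V) by linarith)
        linarith
      · intro h
        rcases lt_or_gt_of_ne hneV with h' | h'
        · exfalso
          have hd0 : y i (sam 0) - y j (sam 0) < 0 := by
            rcases lt_or_gt_of_ne hne0 with h'' | h''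
            · linarith
            · exact absurd (by linarith) h
          have hp := mul_pos_of_neg_of_neg hd0 (show y i (sam V) - y j (sam V) < 0 by linarith)
          linarith
        · linarith
    -- now the cards
    have hsub : (Finset.univ.filter (fun j => y j (sam 0) < y i (sam 0)))
        ⊆ Finset.univ.erase i := by
      intro k hk
      rw [Finset.mem_filter] at hk
      rw [Finset.mem_erase]
      exact ⟨fun hki => by rw [hki] at hk; exact lt_irrefl _ hk.2, Finset.mem_univ _⟩
    have hAeq : (Finset.univ.filter (fun j => y j (sam V) < y i (sam V)))
        = Finset.univ.erase i \ (Finset.univ.filter (fun j => y j (sam 0) < y i (sam 0))) := by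
      ext j
      simp only [Finset.mem_filter, Finset.mem_univ, true_and, Finset.mem_sdiff,
        Finset.mem_erase, and_true]
      rcases eq_or_ne j i with rfl | hji
      · simp
      · rw [hkey j hji]
        constructor
        · intro h; exact ⟨hji, h⟩
        · rintro ⟨_, h⟩; exact h
    have hcards : (Finset.univ.filter (fun j => y j (sam V) < y i (sam V))).card
        = (Finset.univ.erase i).card
          - (Finset.univ.filter (fun j => y j (sam 0) < y i (sam 0))).card := by
      rw [hAeq]; exact Finset.card_sdiff_of_subset hsub
    have hBle := Finset.card_le_card hsub
    rw [Finset.card_erase_of_mem (Finset.mem_univ i), Finset.card_univ, ← hndef] at hcards hBle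
    rw [hposN_eq, hposN_eq]
    omega
  -- huniq
  have huniqP : ∀ i j : ι, i ≠ j → ∃! r, (1 ≤ r ∧ r ≤ V) ∧ i ∈ SS r ∧ j ∈ SS r := by
    intro i j hij
    obtain ⟨r, hr, hrt, hiS, hjS⟩ := hvertex_of_cross i j hij
    refine ⟨r, ⟨hr, hiS, hjS⟩, ?_⟩
    rintro r' ⟨hr', hiS', hjS'⟩
    have h1 : y i (tc (vrt r')) = y j (tc (vrt r')) := by
      rw [(hSmem r' i).1 hiS', (hSmem r' j).1 hjS']
    have h2 : tc (vrt r') = τf i j := (hcross_iff i j hij _).1 h1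
    have h3 := htval_inj (r'-1) (r-1) (by omega) (by omega) (by
      rw [← hvrt_tc r' hr'.1 hr'.2, ← hvrt_tc r hr.1 hr.2, h2, hrt])
    omega
  -- hab
  have habP : ∀ r, 1 ≤ r → r ≤ V → 1 ≤ aF r ∧ aF r < bF r ∧ bF r ≤ n := by
    intro r h1 h2
    obtain ⟨i₀, hi₀S, hi₀⟩ := Finset.exists_mem_eq_inf' (hSne r) (posN (r-1))
    obtain ⟨j₀, hj₀S, hj₀⟩ := Finset.exists_mem_eq_sup' (hSne r) (posN (r-1))
    have haFr : aF r = posN (r-1) i₀ := hi₀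
    have hbFr : bF r = posN (r-1) j₀ := hj₀
    obtain ⟨i, j, hij, hiS, hjS⟩ := hSne2 r
    have hr1V : r - 1 ≤ V := by omega
    have h3 : aF r ≤ posN (r-1) i := Finset.inf'_le _ hiS
    have h4 : posN (r-1) i ≤ bF r := Finset.le_sup' _ hiS
    have h5 : aF r ≤ posN (r-1) j := Finset.inf'_le _ hjS
    have h6 : posN (r-1) j ≤ bF r := Finset.le_sup' _ hjS
    have h7 : posN (r-1) i ≠ posN (r-1) j := fun h => hij (hposinj (r-1) hr1V h)
    have h8 := hposrange (r-1) i₀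
    have h9 := hposrange (r-1) j₀
    omega
  -- assemble the sweep data
  set D : MelData ι := ⟨n, V, posN, SS, aF, bF, hn, hW, hndef.symm, hposinj,
    (fun s _ i => hposrange s i), hblockP, hstayP, habP, hreflP, huniqP⟩ with hD
  have hfinal := D.sum_card_S_le
  -- transfer the sum
  have hkOf : ∀ v : W, ∃ k, k < V ∧ tval k = tc v := fun v => htsurj (tc v)
    (by rw [hT]; exact Finset.mem_image_of_mem _ (Finset.mem_univ v))
  choose kOf hkOf1 hkOf2 using hkOf
  have hsum : ∑ v : W, (Finset.univ.filter (fun i : ι => α i * tc v + β i = hgt v)).card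
      = ∑ r ∈ Finset.Icc 1 V, (SS r).card := by
    apply Finset.sum_nbij' (fun v => kOf v + 1) (fun r => vrt r)
    · intro v _
      rw [Finset.mem_Icc]
      have := hkOf1 v
      omega
    · intro r _
      exact Finset.mem_univ _
    · intro v _
      have h2 := hvrt_tc (kOf v + 1) (by omega) (by have := hkOf1 v; omega)
      simp only [Nat.add_sub_cancel] at h2
      exact htinj (by rw [h2, hkOf2])
    · intro r hr
      rw [Finset.mem_Icc] at hr
      have h2 := hvrt_tc r hr.1 hr.2
      have h3 : kOf (vrt r) = r - 1 := htval_inj _ _ (hkOf1 (vrt r)) (by omega)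
        (by rw [hkOf2, h2])
      omega
    · intro v _
      congr 1
      have h2 := hvrt_tc (kOf v + 1) (by omega) (by have := hkOf1 v; omega)
      simp only [Nat.add_sub_cancel] at h2
      have hvv : vrt (kOf v + 1) = v := htinj (by rw [h2, hkOf2])
      rw [hSS]
      simp only [hvv]
      exact Finset.filter_congr (fun i _ => Iff.rfl)
  rw [hsum]
  exact hfinal

end MelSweep

section MelGlue
open scoped Classical

theorem mel_melchior (L : Finset (Submodule ℝ MM)) (hL : ∀ l ∈ L, Module.finrank ℝ l = 2)
    (hcard : 3 ≤ L.card)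
    (hnc : ¬ ∃ q : Submodule ℝ MM, Module.finrank ℝ q = 1 ∧ ∀ l ∈ L, q ≤ l) :
    ∑ v ∈ L.offDiag.image (fun q => q.1 ⊓ q.2), (L.filter (fun l => v ≤ l)).card
      ≤ 3 * (L.offDiag.image (fun q => q.1 ⊓ q.2)).card - 3 := by
  classical
  set Vert := L.offDiag.image (fun q => q.1 ⊓ q.2) with hVertdef
  have hVert1 : ∀ v ∈ Vert, Module.finrank ℝ v = 1 := by
    intro v hv
    rw [hVertdef, Finset.mem_image] at hv
    obtain ⟨⟨l₁, l₂⟩, hmem, rfl⟩ := hv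
    rw [Finset.mem_offDiag] at hmem
    exact mel_meet_finrank (hL _ hmem.1) (hL _ hmem.2.1) hmem.2.2
  have hVert2 : ∀ v ∈ Vert, ∃ l₁ ∈ L, ∃ l₂ ∈ L, l₁ ≠ l₂ ∧ v = l₁ ⊓ l₂ := by
    intro v hv
    rw [hVertdef, Finset.mem_image] at hv
    obtain ⟨⟨l₁, l₂⟩, hmem, rfl⟩ := hv
    rw [Finset.mem_offDiag] at hmem
    exact ⟨l₁, hmem.1, l₂, hmem.2.1, hmem.2.2, rfl⟩
  have hmeet_mem : ∀ l₁ ∈ L, ∀ l₂ ∈ L, l₁ ≠ l₂ → l₁ ⊓ l₂ ∈ Vert := by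
    intro l₁ h₁ l₂ h₂ hne
    rw [hVertdef, Finset.mem_image]
    exact ⟨(l₁, l₂), Finset.mem_offDiag.2 ⟨h₁, h₂, hne⟩, rfl⟩
  -- Vert has at least 2 elements
  have hL2 : ∀ l ∈ L, ∃ l' ∈ L, l ≠ l' := by
    intro l hl
    by_contra h
    push_neg at h
    have : L ⊆ {l} := fun z hz => Finset.mem_singleton.2 (h z hz).symm
    have := Finset.card_le_card this
    simp at this
    omega
  have hVert_card : 2 ≤ Vert.card := by
    by_contra h
    push_neg at h
    obtain ⟨l₁, hl₁, hl₂'⟩ : ∃ l₁ ∈ L, ∃ l₂ ∈ L, l₁ ≠ l₂ := by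
      have : 1 < L.card := by omega
      obtain ⟨a, ha, b, hb, hab⟩ := Finset.one_lt_card.1 this
      exact ⟨a, ha, b, hb, hab⟩
    obtain ⟨l₂, hl₂, hne⟩ := hl₂'
    have hv₀ : l₁ ⊓ l₂ ∈ Vert := hmeet_mem l₁ hl₁ l₂ hl₂ hne
    apply hnc
    refine ⟨l₁ ⊓ l₂, mel_meet_finrank (hL _ hl₁) (hL _ hl₂) hne, ?_⟩
    intro l hl
    obtain ⟨l', hl', hne'⟩ := hL2 l hl
    have hmem : l ⊓ l' ∈ Vert := hmeet_mem l hl l' hl' hne'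
    have : l ⊓ l' = l₁ ⊓ l₂ := by
      by_contra hcon
      have h2 : 2 ≤ Vert.card := Finset.one_lt_card.2 ⟨_, hmem, _, hv₀, hcon⟩
      omega
    calc l₁ ⊓ l₂ = l ⊓ l' := this.symm
      _ ≤ l := inf_le_left
  -- normals of the lines
  have hker : ∀ i : {l // l ∈ L}, ∃ φ : Module.Dual ℝ MM, LinearMap.ker φ = i.1 :=
    fun i => mel_exists_ker (hL i.1 i.2)
  choose φ hφ using hker
  -- generators of the vertices
  have hgenV : ∀ v : {v // v ∈ Vert}, ∃ x : MM, x ∈ v.1 ∧ x ≠ 0 ∧ v.1 = Submodule.span ℝ {x} :=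
    fun v => mel_gen (hVert1 v.1 v.2)
  choose x hx1 hx2 hx3 using hgenV
  -- a nonzero point on each line
  have hlinep : ∀ i : {l // l ∈ L}, ∃ w, w ∈ i.1 ∧ w ≠ 0 := by
    intro i
    have hne : i.1 ≠ ⊥ := by
      intro h
      have h2 := hL i.1 i.2
      rw [h] at h2
      simp [finrank_bot] at h2
    exact Submodule.exists_mem_ne_zero_of_ne_bot hne
  choose w hw1 hw2 using hlinep
  -- the functional ψ
  obtain ⟨ψ, hψ⟩ := mel_exists_dual ((Vert.attach.image x) ∪ (Finset.univ.image w)) (by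
    intro h0
    rcases Finset.mem_union.1 h0 with h | h
    · obtain ⟨v, _, hv⟩ := Finset.mem_image.1 h
      exact hx2 v hv
    · obtain ⟨i, _, hi⟩ := Finset.mem_image.1 h
      exact hw2 i hi)
  have hψx : ∀ v, ψ (x v) ≠ 0 := fun v =>
    hψ _ (Finset.mem_union_left _ (Finset.mem_image_of_mem _ (Finset.mem_attach _ v)))
  have hψw : ∀ i, ψ (w i) ≠ 0 := fun i =>
    hψ _ (Finset.mem_union_right _ (Finset.mem_image_of_mem _ (Finset.mem_univ i)))
  -- normalized representatives
  set u : {v // v ∈ Vert} → MM := fun v => (ψ (x v))⁻¹ • x v with hu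
  have hψu : ∀ v, ψ (u v) = 1 := by
    intro v
    rw [hu]
    simp only [map_smul, smul_eq_mul]
    exact inv_mul_cancel₀ (hψx v)
  have hu_mem : ∀ v, u v ∈ v.1 := fun v => Submodule.smul_mem _ _ (hx1 v)
  have hu_span : ∀ v, v.1 = Submodule.span ℝ {u v} := by
    intro v
    apply le_antisymm
    · conv_lhs => rw [hx3 v]
      rw [Submodule.span_le, Set.singleton_subset_iff]
      have hxv : x v = ψ (x v) • u v := by
        rw [hu]
        simp only [smul_smul]
        rw [mul_inv_cancel₀ (hψx v), one_smul]
      rw [hxv]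
      exact Submodule.smul_mem _ _ (Submodule.mem_span_singleton_self _)
    · rw [mel_span_le_iff]
      exact hu_mem v
  have hle_iff : ∀ (v : {v // v ∈ Vert}) (i : {l // l ∈ L}), v.1 ≤ i.1 ↔ u v ∈ i.1 := by
    intro v i
    constructor
    · intro h; exact h (hu_mem v)
    · intro h
      rw [hu_span v, mel_span_le_iff]
      exact h
  -- the kernel of ψ is a line
  have hιL : Nonempty {l // l ∈ L} := by
    have : 0 < L.card := by omega
    obtain ⟨l, hl⟩ := Finset.card_pos.1 this
    exact ⟨⟨l, hl⟩⟩
  obtain ⟨i₀⟩ := hιL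
  have hrange1 : ∀ (ξ : Module.Dual ℝ MM) (m : MM), ξ m ≠ 0 →
      Module.finrank ℝ (LinearMap.ker ξ) = 2 := by
    intro ξ m hm
    have hr := LinearMap.finrank_range_add_finrank_ker ξ
    rw [mel_finrank_M] at hr
    have h1 : LinearMap.range ξ ≠ ⊥ := by
      intro h
      have h2 : ξ m ∈ LinearMap.range ξ := LinearMap.mem_range_self _ _
      rw [h] at h2
      exact hm (by simpa using h2)
    have hle : Module.finrank ℝ (LinearMap.range ξ) ≤ 1 := by
      have := Submodule.finrank_le (LinearMap.range ξ)
      rwa [Module.finrank_self] at this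
    have hpos : 0 < Module.finrank ℝ (LinearMap.range ξ) := by
      rcases Nat.eq_zero_or_pos (Module.finrank ℝ (LinearMap.range ξ)) with h | h
      · exact absurd (Submodule.finrank_eq_zero.1 h) h1
      · exact h
    omega
  have hkerψ : Module.finrank ℝ (LinearMap.ker ψ) = 2 := hrange1 ψ (w i₀) (hψw i₀)
  have hlψ : ∀ i : {l // l ∈ L}, i.1 ≠ LinearMap.ker ψ := by
    intro i h
    have : w i ∈ LinearMap.ker ψ := by rw [← h]; exact hw1 i
    exact hψw i (LinearMap.mem_ker.1 this)
  have hz : ∀ i : {l // l ∈ L}, ∃ z, z ∈ i.1 ∧ z ∈ LinearMap.ker ψ ∧ z ≠ 0 := by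
    intro i
    have hfr : Module.finrank ℝ ↥(i.1 ⊓ LinearMap.ker ψ) = 1 :=
      mel_meet_finrank (hL i.1 i.2) hkerψ (hlψ i)
    obtain ⟨z, hz1, hz2, _⟩ := mel_gen hfr
    exact ⟨z, (Submodule.mem_inf.1 hz1).1, (Submodule.mem_inf.1 hz1).2, hz2⟩
  choose z hzl hzψ hz0 using hz
  -- the functional χ
  obtain ⟨χ, hχ⟩ := mel_exists_dual
    (((Vert.attach.offDiag).image (fun pp => u pp.1 - u pp.2)) ∪ (Finset.univ.image z)) (by
    intro h0
    rcases Finset.mem_union.1 h0 with h | h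
    · obtain ⟨⟨v₁, v₂⟩, hmem, hv⟩ := Finset.mem_image.1 h
      rw [Finset.mem_offDiag] at hmem
      have h2 : u v₁ - u v₂ = 0 := hv
      have : u v₁ = u v₂ := sub_eq_zero.1 h2
      have hv12 : v₁.1 = v₂.1 := by
        rw [hu_span v₁, hu_span v₂, this]
      exact hmem.2.2 (Subtype.ext hv12)
    · obtain ⟨i, _, hi⟩ := Finset.mem_image.1 h
      exact hz0 i hi)
  have hχd : ∀ v₁ v₂, v₁ ≠ v₂ → χ (u v₁ - u v₂) ≠ 0 := by
    intro v₁ v₂ hne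
    have hpair : (v₁, v₂) ∈ Vert.attach.offDiag := Finset.mem_offDiag.2
      ⟨Finset.mem_attach _ _, Finset.mem_attach _ _, hne⟩
    exact hχ _ (Finset.mem_union_left _ (Finset.mem_image_of_mem (fun pp => u pp.1 - u pp.2) hpair))
  have hχz : ∀ i, χ (z i) ≠ 0 := fun i =>
    hχ _ (Finset.mem_union_right _ (Finset.mem_image_of_mem _ (Finset.mem_univ i)))
  have hkerχ : Module.finrank ℝ (LinearMap.ker χ) = 2 := hrange1 χ (z i₀) (hχz i₀)
  have hψχ : LinearMap.ker ψ ≠ LinearMap.ker χ := by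
    intro h
    have : z i₀ ∈ LinearMap.ker χ := by rw [← h]; exact LinearMap.mem_ker.2 (hzψ i₀)
    exact hχz i₀ (LinearMap.mem_ker.1 this)
  have hfrz' : Module.finrank ℝ ↥(LinearMap.ker ψ ⊓ LinearMap.ker χ) = 1 :=
    mel_meet_finrank hkerψ hkerχ hψχ
  obtain ⟨z', hz'1, hz'0, hz'span⟩ := mel_gen hfrz'
  obtain ⟨ω, hω⟩ := mel_exists_dual {z'} (by
    rw [Finset.mem_singleton]
    exact fun h => hz'0 h.symm)
  have hωz' : ω z' ≠ 0 := hω z' (Finset.mem_singleton_self _)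
  -- the coordinate system
  set Φmap : MM →ₗ[ℝ] (Fin 3 → ℝ) := LinearMap.pi (fun k => ![ψ, χ, ω] k) with hΦmap
  have hΦapp0 : ∀ m : MM, Φmap m 0 = ψ m := fun m => rfl
  have hΦapp1 : ∀ m : MM, Φmap m 1 = χ m := fun m => rfl
  have hΦapp2 : ∀ m : MM, Φmap m 2 = ω m := fun m => rfl
  have hΦinj : Function.Injective Φmap := by
    rw [← LinearMap.ker_eq_bot]
    rw [eq_bot_iff]
    intro m hm
    rw [LinearMap.mem_ker] at hm
    have hψm : ψ m = 0 := by rw [← hΦapp0 m, hm]; rfl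
    have hχm : χ m = 0 := by rw [← hΦapp1 m, hm]; rfl
    have hωm : ω m = 0 := by rw [← hΦapp2 m, hm]; rfl
    have hmker : m ∈ LinearMap.ker ψ ⊓ LinearMap.ker χ :=
      Submodule.mem_inf.2 ⟨LinearMap.mem_ker.2 hψm, LinearMap.mem_ker.2 hχm⟩
    rw [hz'span] at hmker
    obtain ⟨c, hc⟩ := Submodule.mem_span_singleton.1 hmker
    have : c * ω z' = 0 := by
      rw [← hωm, ← hc, map_smul, smul_eq_mul]
    have hc0 : c = 0 := by
      rcases mul_eq_zero.1 this with h | h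
      · exact h
      · exact absurd h hωz'
    rw [Submodule.mem_bot, ← hc, hc0, zero_smul]
  have hΦsurj : Function.Surjective Φmap :=
    (LinearMap.injective_iff_surjective_of_finrank_eq_finrank rfl).1 hΦinj
  set ΨE := LinearEquiv.ofBijective Φmap ⟨hΦinj, hΦsurj⟩ with hΨE
  set e : Fin 3 → MM := fun k => ΨE.symm (Pi.single k 1) with he
  have hΦe : ∀ k, Φmap (e k) = Pi.single k 1 := by
    intro k
    have : ΨE (e k) = Pi.single k 1 := by
      rw [he]
      exact ΨE.apply_symm_apply _
    exact this
  have hψe0 : ψ (e 0) = 1 := by rw [← hΦapp0, hΦe]; simp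
  have hψe1 : ψ (e 1) = 0 := by rw [← hΦapp0, hΦe]; simp [Pi.single_apply]
  have hψe2 : ψ (e 2) = 0 := by rw [← hΦapp0, hΦe]; simp [Pi.single_apply]
  have hχe0 : χ (e 0) = 0 := by rw [← hΦapp1, hΦe]; simp [Pi.single_apply]
  have hχe1 : χ (e 1) = 1 := by rw [← hΦapp1, hΦe]; simp
  have hχe2 : χ (e 2) = 0 := by rw [← hΦapp1, hΦe]; simp [Pi.single_apply]
  have hωe0 : ω (e 0) = 0 := by rw [← hΦapp2, hΦe]; simp [Pi.single_apply]
  have hωe1 : ω (e 1) = 0 := by rw [← hΦapp2, hΦe]; simp [Pi.single_apply]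
  have hωe2 : ω (e 2) = 1 := by rw [← hΦapp2, hΦe]; simp
  -- the expansion of an arbitrary functional
  have hexp : ∀ (i : {l // l ∈ L}) (m : MM),
      φ i m = φ i (e 0) * ψ m + φ i (e 1) * χ m + φ i (e 2) * ω m := by
    intro i m
    have hdec : m = ψ m • e 0 + χ m • e 1 + ω m • e 2 := by
      apply hΦinj
      rw [map_add, map_add, map_smul, map_smul, map_smul, hΦe 0, hΦe 1, hΦe 2]
      funext k
      fin_cases k <;>
        simp [hΦapp0, hΦapp1, hΦapp2, Pi.single_apply]
    conv_lhs => rw [hdec]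
    rw [map_add, map_add, map_smul, map_smul, map_smul]
    simp only [smul_eq_mul]
    ring
  -- the leading coefficient is nonzero
  have hnot_top : ∀ i : {l // l ∈ L}, ∃ m : MM, m ∉ i.1 := by
    intro i
    by_contra h
    push_neg at h
    have htop : i.1 = ⊤ := Submodule.eq_top_iff'.2 h
    have h2 := hL i.1 i.2
    rw [htop] at h2
    rw [finrank_top, mel_finrank_M] at h2
    omega
  have hmemker : ∀ (i : {l // l ∈ L}) (m : MM), m ∈ i.1 ↔ φ i m = 0 := by
    intro i m
    rw [← hφ i]
    exact Iff.rfl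
  have hro : ∀ i : {l // l ∈ L}, φ i (e 2) ≠ 0 := by
    intro i hri
    have hz1 : φ i (z i) = 0 := (hmemker i (z i)).1 (hzl i)
    have hz2 := hexp i (z i)
    rw [hri, (show ψ (z i) = 0 from hzψ i)] at hz2
    have hqi : φ i (e 1) = 0 := by
      have : φ i (e 1) * χ (z i) = 0 := by linarith
      rcases mul_eq_zero.1 this with h | h
      · exact h
      · exact absurd h (hχz i)
    have hw0 : φ i (w i) = 0 := (hmemker i (w i)).1 (hw1 i)
    have hw2' := hexp i (w i)
    rw [hri, hqi] at hw2'
    have hpi : φ i (e 0) = 0 := by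
      have : φ i (e 0) * ψ (w i) = 0 := by linarith
      rcases mul_eq_zero.1 this with h | h
      · exact h
      · exact absurd h (hψw i)
    obtain ⟨m, hm⟩ := hnot_top i
    apply hm
    rw [hmemker i m, hexp i m, hri, hqi, hpi]
    ring
  -- slopes and intercepts
  set alf : {l // l ∈ L} → ℝ := fun i => -(φ i (e 1)) / (φ i (e 2)) with half
  set bet : {l // l ∈ L} → ℝ := fun i => -(φ i (e 0)) / (φ i (e 2)) with hbet
  have hmem_iff : ∀ (i : {l // l ∈ L}) (m : MM), ψ m = 1 →
      (m ∈ i.1 ↔ alf i * χ m + bet i = ω m) := by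
    intro i m hψm
    rw [hmemker i m, hexp i m, hψm, mul_one]
    have hr := hro i
    constructor
    · intro h
      rw [half, hbet]
      field_simp
      first
        | linear_combination (-((φ i) (e 2))) * h
        | linear_combination -h
    · intro h
      rw [half, hbet] at h
      field_simp at h
      have h3 : (φ i) (e 2) * ((φ i) (e 0) + (φ i) (e 1) * χ m + (φ i) (e 2) * ω m) = 0 := by
        first
          | linear_combination - h
          | linear_combination (-((φ i) (e 2))) * h
      rcases mul_eq_zero.1 h3 with h4 | h4
      · exact absurd h4 hr
      · linarith
  -- vertex coordinates
  set tc : {v // v ∈ Vert} → ℝ := fun v => χ (u v) with htc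
  set hgt : {v // v ∈ Vert} → ℝ := fun v => ω (u v) with hhgt
  have hthrough : ∀ (i : {l // l ∈ L}) (v : {v // v ∈ Vert}),
      v.1 ≤ i.1 ↔ alf i * tc v + bet i = hgt v := by
    intro i v
    rw [hle_iff v i]
    exact hmem_iff i (u v) (hψu v)
  have htinj : Function.Injective tc := by
    intro v₁ v₂ h
    by_contra hne
    apply hχd v₁ v₂ hne
    rw [map_sub]
    rw [htc] at h
    simp only at h
    linarith [h]
  -- the point of the plane with given coordinates
  have hm_in_v : ∀ (v : {v // v ∈ Vert}) (m : MM), ψ m = 1 → m ∈ v.1 → m = u v := by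
    intro v m hψm hmv
    rw [hu_span v] at hmv
    obtain ⟨c, hc⟩ := Submodule.mem_span_singleton.1 hmv
    have hcψ : c * ψ (u v) = 1 := by
      have h2 : ψ (c • u v) = ψ m := congrArg ψ hc
      rw [map_smul, smul_eq_mul, hψm] at h2
      exact h2
    rw [hψu v, mul_one] at hcψ
    rw [← hc, hcψ, one_smul]
  have hmk : ∀ t h : ℝ, ψ (e 0 + t • e 1 + h • e 2) = 1 ∧ χ (e 0 + t • e 1 + h • e 2) = t
      ∧ ω (e 0 + t • e 1 + h • e 2) = h := by
    intro t h
    refine ⟨?_, ?_, ?_⟩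
    · simp [map_add, map_smul, hψe0, hψe1, hψe2]
    · simp [map_add, map_smul, hχe0, hχe1, hχe2]
    · simp [map_add, map_smul, hωe0, hωe1, hωe2]
  -- hypotheses of the sweep lemma
  have hcrossT : ∀ i j : {l // l ∈ L}, i ≠ j → ∀ τ : ℝ,
      alf i * τ + bet i = alf j * τ + bet j →
      ∃ v : {v // v ∈ Vert}, tc v = τ ∧ (alf i * tc v + bet i = hgt v)
        ∧ (alf j * tc v + bet j = hgt v) := by
    intro i j hij τ hcr
    have hij' : i.1 ≠ j.1 := fun h => hij (Subtype.ext h)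
    set m := e 0 + τ • e 1 + (alf i * τ + bet i) • e 2 with hm
    obtain ⟨hψm, hχm, hωm⟩ := hmk τ (alf i * τ + bet i)
    have hmi : m ∈ i.1 := (hmem_iff i m hψm).2 (by rw [hχm, hωm])
    have hmj : m ∈ j.1 := (hmem_iff j m hψm).2 (by rw [hχm, hωm, hcr])
    have hvmem : i.1 ⊓ j.1 ∈ Vert := hmeet_mem i.1 i.2 j.1 j.2 hij'
    set v : {v // v ∈ Vert} := ⟨i.1 ⊓ j.1, hvmem⟩ with hv
    have hmv : m ∈ v.1 := Submodule.mem_inf.2 ⟨hmi, hmj⟩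
    have hmu : m = u v := hm_in_v v m hψm hmv
    have htcv : tc v = τ := by rw [htc]; simp only; rw [← hmu, hχm]
    refine ⟨v, htcv, ?_, ?_⟩
    · rw [← (hthrough i v)]
      exact inf_le_left
    · rw [← (hthrough j v)]
      exact inf_le_right
  have halfne : ∀ i j : {l // l ∈ L}, i ≠ j → alf i ≠ alf j := by
    intro i j hij heq
    have hij' : i.1 ≠ j.1 := fun h => hij (Subtype.ext h)
    have hvmem : i.1 ⊓ j.1 ∈ Vert := hmeet_mem i.1 i.2 j.1 j.2 hij'
    set v : {v // v ∈ Vert} := ⟨i.1 ⊓ j.1, hvmem⟩ with hv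
    have h1 : alf i * tc v + bet i = hgt v := (hthrough i v).1 inf_le_left
    have h2 : alf j * tc v + bet j = hgt v := (hthrough j v).1 inf_le_right
    have hbet_eq : bet i = bet j := by rw [heq] at h1; linarith
    -- then the lines agree at two points, contradicting dim 1 of the meet
    have hcr : ∀ τ : ℝ, alf i * τ + bet i = alf j * τ + bet j := by
      intro τ; rw [heq, hbet_eq]
    obtain ⟨m₀, hψm₀, hχm₀, hωm₀⟩ : ∃ m, ψ m = 1 ∧ χ m = tc v + 1
        ∧ ω m = alf i * (tc v + 1) + bet i :=
      ⟨_, (hmk (tc v + 1) (alf i * (tc v + 1) + bet i)).1,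
        (hmk (tc v + 1) (alf i * (tc v + 1) + bet i)).2.1,
        (hmk (tc v + 1) (alf i * (tc v + 1) + bet i)).2.2⟩
    have hmi : m₀ ∈ i.1 := (hmem_iff i m₀ hψm₀).2 (by rw [hχm₀, hωm₀])
    have hmj : m₀ ∈ j.1 := (hmem_iff j m₀ hψm₀).2 (by rw [hχm₀, hωm₀, hcr])
    have hmv : m₀ ∈ v.1 := Submodule.mem_inf.2 ⟨hmi, hmj⟩
    have hmu : m₀ = u v := hm_in_v v m₀ hψm₀ hmv
    have : tc v + 1 = tc v := by rw [← hχm₀, hmu]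
    linarith
  have hsurj : ∀ v : {v // v ∈ Vert}, ∃ i j : {l // l ∈ L}, i ≠ j
      ∧ (alf i * tc v + bet i = hgt v) ∧ (alf j * tc v + bet j = hgt v) := by
    intro v
    obtain ⟨l₁, h₁, l₂, h₂, hne, heq⟩ := hVert2 v.1 v.2
    refine ⟨⟨l₁, h₁⟩, ⟨l₂, h₂⟩, fun h => hne (congrArg Subtype.val h), ?_, ?_⟩
    · rw [← hthrough]
      show v.1 ≤ l₁
      rw [heq]; exact inf_le_left
    · rw [← hthrough]
      show v.1 ≤ l₂
      rw [heq]; exact inf_le_right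
  -- apply the sweep lemma
  have hnι : 3 ≤ Fintype.card {l // l ∈ L} := by
    rw [Fintype.card_coe]; exact hcard
  have hWκ : 2 ≤ Fintype.card {v // v ∈ Vert} := by
    rw [Fintype.card_coe]; exact hVert_card
  have hmain := mel_sweep alf bet tc hgt hnι hWκ htinj halfne hsurj hcrossT
  -- translate the conclusion
  have hcardW : Fintype.card {v // v ∈ Vert} = Vert.card := Fintype.card_coe _
  have hsum_eq : ∑ v : {v // v ∈ Vert},
      (Finset.univ.filter (fun i : {l // l ∈ L} => alf i * tc v + bet i = hgt v)).card
      = ∑ v ∈ Vert, (L.filter (fun l => v ≤ l)).card := by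
    rw [← Finset.sum_coe_sort Vert (fun v => (L.filter (fun l => v ≤ l)).card)]
    apply Finset.sum_congr rfl
    intro v _
    apply Finset.card_bij (fun (i : {l // l ∈ L}) _ => i.1)
    · intro i hi
      rw [Finset.mem_filter] at hi ⊢
      refine ⟨i.2, ?_⟩
      rw [← hthrough i v] at hi
      exact hi.2
    · intro i₁ h₁ i₂ h₂ h
      exact Subtype.ext h
    · intro l hl
      rw [Finset.mem_filter] at hl
      refine ⟨⟨l, hl.1⟩, ?_, rfl⟩
      rw [Finset.mem_filter]
      exact ⟨Finset.mem_univ _, (hthrough ⟨l, hl.1⟩ v).1 hl.2⟩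
  rw [hsum_eq, hcardW] at hmain
  exact hmain

end MelGlue


theorem stmt0 (P L : Finset (Submodule ℝ (Fin 3 → ℝ)))
    (hP : ∀ p ∈ P, IsProjPoint p) (hL : ∀ l ∈ L, IsProjLine l)
    (hcard : 3 ≤ L.card)
    (hnotconcurrent : ¬ ∃ q : Submodule ℝ (Fin 3 → ℝ), IsProjPoint q ∧ ∀ l ∈ L, q ≤ l)
    (hdeg : ∀ p ∈ P, 2 ≤ pointDeg L p) :
    ∑ p ∈ P, (pointDeg L p : ℤ) * ((pointDeg L p : ℤ) + 1)
      ≤ (L.card : ℤ) * ((L.card : ℤ) - 1) + 6 * ((P.card : ℤ) - 1) := by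
  classical
  have hL' : ∀ l ∈ L, Module.finrank ℝ l = 2 := hL
  have hP' : ∀ p ∈ P, Module.finrank ℝ p = 1 := hP
  set n := L.card with hn
  set Vert := L.offDiag.image (fun q => q.1 ⊓ q.2) with hVertdef
  have hVert1 : ∀ v ∈ Vert, Module.finrank ℝ v = 1 := by
    intro v hv
    rw [hVertdef, Finset.mem_image] at hv
    obtain ⟨⟨l₁, l₂⟩, hmem, rfl⟩ := hv
    rw [Finset.mem_offDiag] at hmem
    exact mel_meet_finrank (hL' _ hmem.1) (hL' _ hmem.2.1) hmem.2.2
  have hVert2 : ∀ v ∈ Vert, ∃ l₁ ∈ L, ∃ l₂ ∈ L, l₁ ≠ l₂ ∧ v = l₁ ⊓ l₂ := by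
    intro v hv
    rw [hVertdef, Finset.mem_image] at hv
    obtain ⟨⟨l₁, l₂⟩, hmem, rfl⟩ := hv
    rw [Finset.mem_offDiag] at hmem
    exact ⟨l₁, hmem.1, l₂, hmem.2.1, hmem.2.2, rfl⟩
  have hmeet_mem : ∀ l₁ ∈ L, ∀ l₂ ∈ L, l₁ ≠ l₂ → l₁ ⊓ l₂ ∈ Vert := by
    intro l₁ h₁ l₂ h₂ hne
    rw [hVertdef, Finset.mem_image]
    exact ⟨(l₁, l₂), Finset.mem_offDiag.2 ⟨h₁, h₂, hne⟩, rfl⟩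
  -- P is contained in Vert
  have hPV : P ⊆ Vert := by
    intro p hp
    have h2 := hdeg p hp
    rw [pointDeg] at h2
    obtain ⟨l₁, h₁, l₂, h₂', hne⟩ := Finset.one_lt_card.1 h2
    rw [Finset.mem_filter] at h₁ h₂'
    have hfr : Module.finrank ℝ ↥(l₁ ⊓ l₂) = 1 :=
      mel_meet_finrank (hL' _ h₁.1) (hL' _ h₂'.1) hne
    have hpeq : p = l₁ ⊓ l₂ := mel_point_eq (hP' p hp) hfr (le_inf h₁.2 h₂'.2)
    rw [hpeq]
    exact hmeet_mem _ h₁.1 _ h₂'.1 hne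
  -- every vertex has degree at least 2
  have hdegV : ∀ v ∈ Vert, 2 ≤ pointDeg L v := by
    intro v hv
    obtain ⟨l₁, h₁, l₂, h₂, hne, heq⟩ := hVert2 v hv
    rw [pointDeg]
    apply Finset.one_lt_card.2
    refine ⟨l₁, Finset.mem_filter.2 ⟨h₁, ?_⟩, l₂, Finset.mem_filter.2 ⟨h₂, ?_⟩, hne⟩
    · rw [heq]; exact inf_le_left
    · rw [heq]; exact inf_le_right
  -- pair counting
  have hfiber : ∀ v ∈ Vert, (L.offDiag.filter (fun q => v ≤ q.1 ∧ v ≤ q.2)).card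
      = pointDeg L v * pointDeg L v - pointDeg L v := by
    intro v hv
    have heq : L.offDiag.filter (fun q => v ≤ q.1 ∧ v ≤ q.2)
        = (L.filter (fun l => v ≤ l)).offDiag := by
      ext ⟨l₁, l₂⟩
      simp only [Finset.mem_filter, Finset.mem_offDiag]
      tauto
    rw [heq, Finset.offDiag_card]
    rfl
  have hcover : L.offDiag = Vert.biUnion (fun v => L.offDiag.filter (fun q => v ≤ q.1 ∧ v ≤ q.2)) := by
    ext q
    simp only [Finset.mem_biUnion]
    constructor
    · intro hq
      have hq' := Finset.mem_offDiag.1 hq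
      exact ⟨q.1 ⊓ q.2, hmeet_mem _ hq'.1 _ hq'.2.1 hq'.2.2,
        Finset.mem_filter.2 ⟨hq, inf_le_left, inf_le_right⟩⟩
    · rintro ⟨v, _, hv⟩
      exact (Finset.mem_filter.1 hv).1
  have hdisj : ∀ v₁ ∈ Vert, ∀ v₂ ∈ Vert, v₁ ≠ v₂ →
      Disjoint (L.offDiag.filter (fun q => v₁ ≤ q.1 ∧ v₁ ≤ q.2))
        (L.offDiag.filter (fun q => v₂ ≤ q.1 ∧ v₂ ≤ q.2)) := by
    intro v₁ hv₁ v₂ hv₂ hne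
    rw [Finset.disjoint_left]
    intro q hq1 hq2
    rw [Finset.mem_filter] at hq1 hq2
    have hq' := Finset.mem_offDiag.1 hq1.1
    have hfr : Module.finrank ℝ ↥(q.1 ⊓ q.2) = 1 :=
      mel_meet_finrank (hL' _ hq'.1) (hL' _ hq'.2.1) hq'.2.2
    have he1 : v₁ = q.1 ⊓ q.2 := mel_point_eq (hVert1 v₁ hv₁) hfr (le_inf hq1.2.1 hq1.2.2)
    have he2 : v₂ = q.1 ⊓ q.2 := mel_point_eq (hVert1 v₂ hv₂) hfr (le_inf hq2.2.1 hq2.2.2)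
    exact hne (he1.trans he2.symm)
  have hpairs_nat : ∑ v ∈ Vert, (pointDeg L v * pointDeg L v - pointDeg L v) = n * n - n := by
    have h1 : L.offDiag.card = n * n - n := by rw [Finset.offDiag_card]
    rw [hcover, Finset.card_biUnion hdisj] at h1
    rw [← h1]
    exact (Finset.sum_congr rfl hfiber).symm
  -- Melchior
  have hmel : ∑ v ∈ Vert, pointDeg L v ≤ 3 * Vert.card - 3 := by
    have := mel_melchior L hL' hcard (by
      intro ⟨q, hq1, hq2⟩
      exact hnotconcurrent ⟨q, hq1, hq2⟩)
    rw [← hVertdef] at this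
    exact this
  -- assemble in ℤ
  have hcast1 : ∑ v ∈ Vert, (pointDeg L v : ℤ) * ((pointDeg L v : ℤ) - 1)
      = (n : ℤ) * ((n : ℤ) - 1) := by
    have hle : ∀ m : ℕ, m ≤ m * m := by
      intro m
      rcases Nat.eq_zero_or_pos m with rfl | h
      · simp
      · exact Nat.le_mul_of_pos_left m h
    have h2 : ∀ v ∈ Vert, (pointDeg L v : ℤ) * ((pointDeg L v : ℤ) - 1)
        = ((pointDeg L v * pointDeg L v - pointDeg L v : ℕ) : ℤ) := by
      intro v _
      rw [Nat.cast_sub (hle _)]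
      push_cast
      ring
    rw [Finset.sum_congr rfl h2, ← Nat.cast_sum, hpairs_nat, Nat.cast_sub (hle n)]
    push_cast
    ring
  have hcast2 : ∑ v ∈ Vert, (pointDeg L v : ℤ) ≤ 3 * (Vert.card : ℤ) - 3 := by
    have h2 : ((∑ v ∈ Vert, pointDeg L v : ℕ) : ℤ) ≤ ((3 * Vert.card - 3 : ℕ) : ℤ) :=
      Nat.cast_le.2 hmel
    rw [Nat.cast_sum] at h2
    have h3 : 2 ≤ Vert.card := by
      have := Finset.card_le_card hPV
      by_contra hcon
      push_neg at hcon
      interval_cases hV : Vert.card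
      · -- Vert empty: but L.offDiag nonempty since |L| ≥ 3
        obtain ⟨a, ha, b, hb, hab⟩ := Finset.one_lt_card.1 (show 1 < L.card by omega)
        have : a ⊓ b ∈ Vert := hmeet_mem _ ha _ hb hab
        rw [Finset.card_eq_zero.1 hV] at this
        simp at this
      · -- Vert a single vertex: all lines concurrent
        obtain ⟨v₀, hv₀⟩ := Finset.card_eq_one.1 hV
        apply hnotconcurrent
        have hv₀m : v₀ ∈ Vert := by rw [hv₀]; simp
        refine ⟨v₀, hVert1 v₀ hv₀m, ?_⟩
        intro l hl
        obtain ⟨l', hl', hne'⟩ : ∃ l' ∈ L, l ≠ l' := by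
          by_contra hcc
          push_neg at hcc
          have : L ⊆ {l} := fun z hz => Finset.mem_singleton.2 (hcc z hz).symm
          have := Finset.card_le_card this
          simp at this
          omega
        have hmem : l ⊓ l' ∈ Vert := hmeet_mem l hl l' hl' hne'
        rw [hv₀] at hmem
        rw [← Finset.mem_singleton.1 hmem]
        exact inf_le_left
    have h4 : ((3 * Vert.card - 3 : ℕ) : ℤ) = 3 * (Vert.card : ℤ) - 3 := by
      rw [Nat.cast_sub (by omega)]
      push_cast
      ring
    rw [h4] at h2
    exact h2
  -- split sums over Vert into P and Vert \ P
  have hsplit : ∀ f : Submodule ℝ (Fin 3 → ℝ) → ℤ,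
      ∑ v ∈ Vert, f v = ∑ p ∈ P, f p + ∑ v ∈ Vert \ P, f v := by
    intro f
    rw [← Finset.sum_sdiff hPV]
    ring
  have hlow : ∀ v ∈ Vert \ P,
      (6:ℤ) ≤ (pointDeg L v : ℤ) * ((pointDeg L v : ℤ) - 1) + 2 * (pointDeg L v : ℤ) := by
    intro v hv
    have h2 : 2 ≤ pointDeg L v := hdegV v (Finset.mem_sdiff.1 hv).1
    have h3 : (2:ℤ) ≤ (pointDeg L v : ℤ) := by exact_mod_cast h2
    nlinarith
  have hsum_low : 6 * ((Vert.card : ℤ) - (P.card : ℤ))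
      ≤ ∑ v ∈ Vert \ P,
        ((pointDeg L v : ℤ) * ((pointDeg L v : ℤ) - 1) + 2 * (pointDeg L v : ℤ)) := by
    have h2 := Finset.sum_le_sum hlow
    rw [Finset.sum_const, nsmul_eq_mul] at h2
    have h3 : (((Vert \ P).card : ℕ) : ℤ) = (Vert.card : ℤ) - (P.card : ℤ) := by
      rw [Finset.card_sdiff_of_subset hPV, Nat.cast_sub (Finset.card_le_card hPV)]
    rw [h3] at h2
    linarith
  have hmain := hsplit
    (fun v => (pointDeg L v : ℤ) * ((pointDeg L v : ℤ) - 1) + 2 * (pointDeg L v : ℤ))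
  have hLHS : ∑ p ∈ P, (pointDeg L p : ℤ) * ((pointDeg L p : ℤ) + 1)
      = ∑ p ∈ P, ((pointDeg L p : ℤ) * ((pointDeg L p : ℤ) - 1) + 2 * (pointDeg L p : ℤ)) := by
    apply Finset.sum_congr rfl
    intro p _
    ring
  have hVert_sum : ∑ v ∈ Vert,
      ((pointDeg L v : ℤ) * ((pointDeg L v : ℤ) - 1) + 2 * (pointDeg L v : ℤ))
      = (n:ℤ) * ((n:ℤ) - 1) + 2 * ∑ v ∈ Vert, (pointDeg L v : ℤ) := by
    rw [Finset.sum_add_distrib, hcast1, ← Finset.mul_sum]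
  rw [hLHS]
  simp only at hmain
  linarith [hmain, hVert_sum, hcast2, hsum_low]
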